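/- Let g ≥ 2. The set S_g of stable graphs of genus g, partially ordered by edge-contraction, is a graded poset with rank function G ↦ 3g − 3 − |E(G)|. -/

import Mathlib

/-!
Common framework: finite vertex-weighted multigraphs (loops and multiple edges
allowed), generalized orientations, divisors, contractions, and poset gadgets.

A graph is encoded by a finite set `V ⊆ ℕ` of vertices, a finite set `E ⊆ ℕ`
of edges, an "ends" function assigning to each edge its ordered pair of
end-vertices (the two components encode the two half-edges), and a weight
function `w : ℕ → ℕ`.

A generalized orientation is a function `ℕ → Option EdgeDir`, where `none`
means the edge is absent (an orientation on a spanning subgraph `G − S` takes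
the value `none` exactly on edges outside `E \ S`), `fwd`/`bwd` give the edge a
single direction, and `bi` makes the edge bioriented.
-/

open scoped Classical
open Finset

/-- Direction of an edge under a generalized orientation. -/
inductive EdgeDir : Type
  | fwd
  | bwd
  | bi
deriving DecidableEq

/-- Generalized orientation data. -/
abbrev Orient : Type := ℕ → Option EdgeDir

/-- The number of ending (target) half-edges at the vertex `v` of an edge with
end-pair `p`, given its direction `d`.  A one-way oriented edge has exactly
one target end; a bioriented edge has both ends as targets. -/
def dirT : Option EdgeDir → ℕ × ℕ → ℕ → ℕ
  | none, _, _ => 0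
  | some EdgeDir.fwd, p, v => if p.2 = v then 1 else 0
  | some EdgeDir.bwd, p, v => if p.1 = v then 1 else 0
  | some EdgeDir.bi, p, v => (if p.1 = v then 1 else 0) + (if p.2 = v then 1 else 0)

/-- Restriction of orientation data to the set `D` of kept edges. -/
def restr (O : Orient) (D : Finset ℕ) : Orient := fun e => if e ∈ D then O e else none

/-- A finite vertex-weighted multigraph. -/
structure WGraph : Type where
  V : Finset ℕ
  E : Finset ℕ
  ends : ℕ → ℕ × ℕ
  w : ℕ → ℕ
  ends_mem : ∀ e ∈ E, (ends e).1 ∈ V ∧ (ends e).2 ∈ V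

namespace WGraph

variable (G : WGraph)

/-- Edge set of the induced subgraph `(G−S)[Z]`: edges of `G − S` with both
ends in `Z`. -/
def indEdges (S Z : Finset ℕ) : Finset ℕ :=
  (G.E \ S).filter fun e => (G.ends e).1 ∈ Z ∧ (G.ends e).2 ∈ Z

/-- The cut `E(Z, Zᶜ)` in `G − S`: edges of `G − S` with exactly one end in `Z`. -/
def cutEdges (S Z : Finset ℕ) : Finset ℕ :=
  (G.E \ S).filter fun e =>
    ((G.ends e).1 ∈ Z ∧ (G.ends e).2 ∉ Z) ∨ ((G.ends e).1 ∉ Z ∧ (G.ends e).2 ∈ Z)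

/-- Adjacency via an edge belonging to `F ∩ E`. -/
def adjOn (F : Finset ℕ) (u v : ℕ) : Prop :=
  ∃ e ∈ F ∩ G.E, G.ends e = (u, v) ∨ G.ends e = (v, u)

/-- Number of connected components of the subgraph with vertex set `W` and
edge set `F`. -/
noncomputable def ncomp (W F : Finset ℕ) : ℕ :=
  Nat.card (Quot (fun u v : {x : ℕ // x ∈ W} => G.adjOn F u.1 v.1))

/-- The subgraph with vertex set `W` and edge set `F` is connected. -/
def ConnSub (W F : Finset ℕ) : Prop := G.ncomp W F = 1

/-- `G` is connected. -/
def Connected : Prop := G.ConnSub G.V G.E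

/-- Genus of the subgraph with vertex set `W` and edge set `F`:
`∑_{v ∈ W} w(v) − |W| + |F| + c`. -/
noncomputable def subGenus (W F : Finset ℕ) : ℤ :=
  (∑ v ∈ W, (G.w v : ℤ)) - (W.card : ℤ) + (((F ∩ G.E).card : ℤ)) + (G.ncomp W F : ℤ)

/-- The genus of `G`. -/
noncomputable def genus : ℤ := G.subGenus G.V G.E

/-- The degree of a vertex: the number of half-edges having `v` as end. -/
def deg (v : ℕ) : ℕ :=
  ∑ e ∈ G.E, ((if (G.ends e).1 = v then 1 else 0) + (if (G.ends e).2 = v then 1 else 0))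

/-- `e` is a bridge of `G − S`: removing it increases the number of connected
components. -/
def IsBridge (S : Finset ℕ) (e : ℕ) : Prop :=
  e ∈ G.E \ S ∧ G.ncomp G.V (G.E \ S) < G.ncomp G.V (G.E \ insert e S)

/-- The set of bridges of `G − S`. -/
noncomputable def bridges (S : Finset ℕ) : Finset ℕ := (G.E \ S).filter (G.IsBridge S)

/-- `T` is a cut of `G`, i.e. `T = E(Z, Zᶜ)` for some `∅ ⊊ Z ⊊ V`. -/
def IsCut (T : Finset ℕ) : Prop :=
  ∃ Z, Z ⊆ G.V ∧ Z.Nonempty ∧ Z ≠ G.V ∧ T = G.cutEdges ∅ Z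

/-- `W` is (the vertex set of) a connected component of `G − S`. -/
def IsCompOf (S W : Finset ℕ) : Prop :=
  W ⊆ G.V ∧ W.Nonempty ∧ G.ConnSub W (G.indEdges S W) ∧ G.cutEdges S W = ∅

/-- The poset `A^b_G`: for `b = 0` the sets `S ⊆ E` with `G − S` bridgeless,
for `b = 1` the sets `S ⊆ E` with `G − S` connected. -/
def Ab (b : ℕ) (S : Finset ℕ) : Prop :=
  S ⊆ G.E ∧ ((b = 0 ∧ ∀ e, ¬ G.IsBridge S e) ∨ (b = 1 ∧ G.ConnSub G.V (G.E \ S)))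

/-- `G` is a stable graph of genus `g`: connected, of genus `g`, and every
vertex of weight `0` has degree at least `3`. -/
noncomputable def Stable (g : ℕ) : Prop :=
  G.Connected ∧ G.genus = (g : ℤ) ∧ ∀ v ∈ G.V, G.w v = 0 → 3 ≤ G.deg v

/-! ### Generalized orientations on spanning subgraphs -/

/-- `O` is orientation data for the spanning subgraph `G − S` (it is defined
exactly on the edges of `G − S`). -/
def IsOrientOn (S : Finset ℕ) (O : Orient) : Prop :=
  ∀ e, O e ≠ none ↔ e ∈ G.E \ S

/-- The set of bioriented edges of `O`. -/
def biE (O : Orient) : Finset ℕ := G.E.filter fun e => O e = some EdgeDir.bi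

/-- `t^O_v`: the number of half-edges having `v` as target. -/
def tOr (O : Orient) (v : ℕ) : ℕ := ∑ e ∈ G.E, dirT (O e) (G.ends e) v

/-- `t^O(Z)`: the number of edges of `G − S` not contained in `(G−S)[Z]`
having a target in `Z`. -/
def tCut (S : Finset ℕ) (O : Orient) (Z : Finset ℕ) : ℕ :=
  ∑ e ∈ (G.E \ S) \ G.indEdges S Z, ∑ v ∈ Z, dirT (O e) (G.ends e) v

/-- The divisor `d^O` of a `b`-orientation `O` on `G − S`:
`d^O_v = w(v) − 1 + t^O_v` if `G − S` has edges, and `d^O_v = w(v) − 1 + b`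
otherwise; it is supported on `V`. -/
noncomputable def divOr (S : Finset ℕ) (b : ℕ) (O : Orient) : ℕ → ℤ :=
  fun v => if v ∈ G.V then
      (if G.E \ S = ∅ then (G.w v : ℤ) - 1 + (b : ℤ) else (G.w v : ℤ) - 1 + (G.tOr O v : ℤ))
    else 0

/-- Equivalence of generalized orientations on `G − S`:  both are orientations
on `G − S` and they have the same divisor. -/
noncomputable def equivOr (S : Finset ℕ) (b : ℕ) (O O' : Orient) : Prop :=
  G.IsOrientOn S O ∧ G.IsOrientOn S O' ∧ G.divOr S b O = G.divOr S b O'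

/-- `O` is a totally cyclic orientation on `G − S`: every nonempty cut
`E(Z,Zᶜ)` contains an edge with target in `Z` and an edge with target in `Zᶜ`. -/
def TotCyc (S : Finset ℕ) (O : Orient) : Prop :=
  ∀ Z : Finset ℕ, Z ⊆ G.V → Z.Nonempty → Z ≠ G.V → (G.cutEdges S Z).Nonempty →
    (∃ e ∈ G.cutEdges S Z, ∃ v ∈ Z, 0 < dirT (O e) (G.ends e) v) ∧
    (∃ e ∈ G.cutEdges S Z, ∃ v ∈ G.V \ Z, 0 < dirT (O e) (G.ends e) v)

/-- `O` is `e₀`-rooted on `G − S`: for every `Z ⊊ V` with `e₀` an edge of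
`(G−S)[Z]`, the cut `E(Z,Zᶜ)` contains an edge with target in `Zᶜ`. -/
def RootedAt (S : Finset ℕ) (O : Orient) (e₀ : ℕ) : Prop :=
  ∀ Z : Finset ℕ, Z ⊆ G.V → Z ≠ G.V → e₀ ∈ G.indEdges S Z →
    ∃ e ∈ G.cutEdges S Z, ∃ v ∈ G.V \ Z, 0 < dirT (O e) (G.ends e) v

/-- `O` is a rooted `1`-orientation on `G − S`:  it has exactly one bioriented
edge, at which it is rooted.  By convention, if `G − S` consists of a single
vertex (and no edges), the empty orientation is rooted. -/
def Rooted1 (S : Finset ℕ) (O : Orient) : Prop :=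
  (∃ e₀, G.biE O = {e₀} ∧ G.RootedAt S O e₀) ∨ (G.E \ S = ∅ ∧ G.V.card = 1)

/-- `O ∈ 𝒪^b(G−S)`:  for `b = 0`, a totally cyclic orientation on `G − S`;
for `b = 1`, a rooted `1`-orientation on `G − S`. -/
def MemOb (S : Finset ℕ) (b : ℕ) (O : Orient) : Prop :=
  G.IsOrientOn S O ∧
    ((b = 0 ∧ G.biE O = ∅ ∧ G.TotCyc S O) ∨ (b = 1 ∧ G.Rooted1 S O))

/-- `O` is a `b`-orientation on `G − S` (exactly `b` bioriented edges; by
convention the empty orientation on a one-vertex edgeless graph counts as a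
`1`-orientation). -/
def IsbOr (S : Finset ℕ) (b : ℕ) (O : Orient) : Prop :=
  G.IsOrientOn S O ∧
    ((G.biE O).card = b ∨ (G.E \ S = ∅ ∧ G.V.card = 1 ∧ b = 1))

/-! ### Posets of orientations on spanning subgraphs -/

/-- The order of `𝒪𝒫^b_G` on pairs `(S, O_S)`:  `(S,O_S) ≤ (T,O_T)` iff
`T ⊆ S` and the restriction of `O_T` to `G − S` is `O_S`. -/
def leOP (p q : Finset ℕ × Orient) : Prop :=
  q.1 ⊆ p.1 ∧ restr q.2 (G.E \ p.1) = p.2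

/-- The order of `𝒪̄𝒫^b_G` on pairs (representing classes): `(S,O̅_S) ≤ (T,O̅_T)`
iff `T ⊆ S` and some representative of `O̅_T` restricts on `G − S` to some
representative of `O̅_S`. -/
noncomputable def leOPbar (b : ℕ) (p q : Finset ℕ × Orient) : Prop :=
  q.1 ⊆ p.1 ∧ ∃ O', G.equivOr q.1 b O' q.2 ∧
    G.equivOr p.1 b (restr O' (G.E \ p.1)) p.2

/-- Equality in `𝒪̄𝒫^b_G`: same subgraph and equivalent orientations. -/
noncomputable def eqOP (b : ℕ) (p q : Finset ℕ × Orient) : Prop :=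
  p.1 = q.1 ∧ G.equivOr p.1 b p.2 q.2

/-- Membership in `𝒪𝒫^b_G`. -/
def POb (b : ℕ) (p : Finset ℕ × Orient) : Prop :=
  G.Ab b p.1 ∧ G.MemOb p.1 b p.2

/-! ### Stable divisors -/

/-- Stable divisors on `G − S` of degree `g(G−S) − c(G−S) + b` (`b = 0, 1`):
for `b = 1`, `G − S` is connected, the degree is `g(G−S)` and
`|d_Z| > g(Z) − 1` for every `Z ⊆ V`; for `b = 0`, the restriction of `d` to
every connected component `W` of `G − S` has degree `g(W) − 1` and satisfies
`|d_Z| > g(Z) − 1` for every `∅ ≠ Z ⊊ W`. -/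
noncomputable def StableDiv (S : Finset ℕ) (b : ℕ) (d : ℕ → ℤ) : Prop :=
  (∀ v, v ∉ G.V → d v = 0) ∧
  ((b = 1 ∧ G.ConnSub G.V (G.E \ S) ∧
      (∑ v ∈ G.V, d v) = G.subGenus G.V (G.E \ S) ∧
      ∀ Z ⊆ G.V, G.subGenus Z (G.indEdges S Z) - 1 < ∑ v ∈ Z, d v) ∨
   (b = 0 ∧ ∀ W, G.IsCompOf S W →
      (∑ v ∈ W, d v) = G.subGenus W (G.indEdges S W) - 1 ∧
      ∀ Z ⊆ W, Z.Nonempty → Z ≠ W →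
        G.subGenus Z (G.indEdges S Z) - 1 < ∑ v ∈ Z, d v))

/-! ### Contractions -/

/-- The relation identifying the two ends of each edge in `S₀`. -/
def conRel (S₀ : Finset ℕ) (u v : ℕ) : Prop :=
  ∃ e ∈ S₀ ∩ G.E, G.ends e = (u, v) ∨ G.ends e = (v, u)

/-- Representative (the least element) of the class of `v` under the
equivalence generated by identifying the ends of the edges in `S₀`. -/
noncomputable def crep (S₀ : Finset ℕ) (v : ℕ) : ℕ :=
  sInf {u | Relation.EqvGen (G.conRel S₀) u v}

/-- The (weighted) edge contraction `G/S₀`: every connected component of the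
subgraph spanned by `S₀` is contracted to a single vertex, whose weight is the
genus of that component; `E(G/S₀) = E(G) \ S₀`. -/
noncomputable def contract (S₀ : Finset ℕ) : WGraph where
  V := G.V.image (G.crep S₀)
  E := G.E \ S₀
  ends := fun e => (G.crep S₀ (G.ends e).1, G.crep S₀ (G.ends e).2)
  w := fun v =>
    (G.subGenus (G.V.filter fun u => G.crep S₀ u = v)
      (G.indEdges (G.E \ S₀) (G.V.filter fun u => G.crep S₀ u = v))).toNat
  ends_mem := by
    intro e he
    rw [Finset.mem_sdiff] at he
    exact ⟨Finset.mem_image_of_mem _ (G.ends_mem e he.1).1,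
           Finset.mem_image_of_mem _ (G.ends_mem e he.1).2⟩

/-- Deletion of the edges in `T` (a spanning subgraph, as a graph). -/
def ddel (T : Finset ℕ) : WGraph where
  V := G.V
  E := G.E \ T
  ends := G.ends
  w := G.w
  ends_mem := fun e he => G.ends_mem e (Finset.mem_sdiff.mp he).1

/-- Pullback `γ* T` of an edge set along the contraction `γ : G → G/S₀`:
`T ∪ (G−T)_br` for `b = 0`, and `T` for `b = 1`. -/
noncomputable def pullStar (b : ℕ) (T : Finset ℕ) : Finset ℕ :=
  if b = 0 then T ∪ G.bridges T else T

/-- Pushforward of a divisor along the contraction `γ : G → G/S₀`: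
`(γ_* d)_v = ∑_{z ∈ γ⁻¹(v)} d_z`. -/
noncomputable def pushDiv (S₀ : Finset ℕ) (d : ℕ → ℤ) : ℕ → ℤ :=
  fun v => ∑ z ∈ G.V.filter (fun u => G.crep S₀ u = v), d z

/-- The divisor `c^{γ,S}` on `G/S₀`: `c^{γ,S}_v = #{e ∈ S₀ ∩ S : γ(e) = v}`. -/
noncomputable def cGamma (S₀ S : Finset ℕ) : ℕ → ℤ :=
  fun v => ((((S₀ ∩ S) ∩ G.E).filter (fun e => G.crep S₀ (G.ends e).1 = v)).card : ℤ)

/-- The relation "`q` is a value of `γ̄_*` at `p`" for the contraction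
`γ : G → G/S₀` acting on classes of orientations: `q` is the restriction to
`(G/S₀) − γ_* S` of a representative of the class of `p` having no bioriented
edge in `S₀` (when `(G/S₀) − γ_*S` has no edges, any representative serves). -/
noncomputable def pushRel (S₀ : Finset ℕ) (b : ℕ) (p q : Finset ℕ × Orient) : Prop :=
  ∃ O', G.equivOr p.1 b O' p.2 ∧
    ((∀ e ∈ S₀, O' e ≠ some EdgeDir.bi) ∨ G.E \ (S₀ ∪ p.1) = ∅) ∧
    q.1 = p.1 \ S₀ ∧ q.2 = restr O' (G.E \ (S₀ ∪ p.1))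

/-! ### Isomorphisms and directed reachability -/

/-- `(fV, fE)` is an isomorphism from `G` to `H`. -/
def IsoMaps (H : WGraph) (fV fE : ℕ → ℕ) : Prop :=
  Set.BijOn fV ↑G.V ↑H.V ∧ Set.BijOn fE ↑G.E ↑H.E ∧
  (∀ e ∈ G.E, H.ends (fE e) = (fV (G.ends e).1, fV (G.ends e).2) ∨
              H.ends (fE e) = (fV (G.ends e).2, fV (G.ends e).1)) ∧
  (∀ v ∈ G.V, H.w (fV v) = G.w v)

/-- `G` and `H` are isomorphic graphs. -/
def Iso (H : WGraph) : Prop := ∃ fV fE, G.IsoMaps H fV fE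

/-- The edge-contraction relation: `G ≤ H` iff `H = G/S₀` (up to isomorphism)
for some `S₀ ⊆ E(G)`. -/
noncomputable def contractLE (H : WGraph) : Prop :=
  ∃ S₀ ⊆ G.E, (G.contract S₀).Iso H

/-- One step from `u` to `v` along an `O`-directed edge (a bioriented edge may
be traversed in both directions). -/
def dirStep (O : Orient) (u v : ℕ) : Prop :=
  ∃ e ∈ G.E,
    (O e = some EdgeDir.fwd ∧ G.ends e = (u, v)) ∨
    (O e = some EdgeDir.bwd ∧ G.ends e = (v, u)) ∨
    (O e = some EdgeDir.bi ∧ (G.ends e = (u, v) ∨ G.ends e = (v, u)))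

/-- There is an `O`-directed path from the (bioriented) edge `e` to the
vertex `v`: a directed path starting at one of the ends of `e` and ending
at `v`. -/
def dirReachFromEdge (O : Orient) (e v : ℕ) : Prop :=
  ∃ u, ((G.ends e).1 = u ∨ (G.ends e).2 = u) ∧
    Relation.ReflTransGen (G.dirStep O) u v

end WGraph

/-! ### Generic poset gadgets (for sets with an order, modulo an equivalence) -/

/-- `le` is a partial order on `{a | P a}` modulo the identification `eqv`. -/
def IsPartialOrderOnMod {α : Type*} (P : α → Prop) (eqv le : α → α → Prop) : Prop :=
  (∀ a, P a → le a a) ∧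
  (∀ a b c, P a → P b → P c → le a b → le b c → le a c) ∧
  (∀ a b, P a → P b → le a b → le b a → eqv a b)

/-- `le` is a partial order on `{a | P a}`. -/
def IsPartialOrderOn {α : Type*} (P : α → Prop) (le : α → α → Prop) : Prop :=
  IsPartialOrderOnMod P (· = ·) le

/-- `a'` covers `a` in `{a | P a}` ordered by `le`, modulo `eqv`. -/
def CoversOnMod {α : Type*} (P : α → Prop) (eqv le : α → α → Prop) (a a' : α) : Prop :=
  P a ∧ P a' ∧ le a a' ∧ ¬ eqv a a' ∧
    ∀ c, P c → le a c → le c a' → (eqv c a ∨ eqv c a')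

/-- `ρ` is a rank on `{a | P a}` ordered by `le`, modulo `eqv`:  along every
covering relation it increases by exactly `1`. -/
def IsRankOnMod {α : Type*} (P : α → Prop) (eqv le : α → α → Prop) (ρ : α → ℕ) : Prop :=
  ∀ a a', CoversOnMod P eqv le a a' → ρ a' = ρ a + 1

/-- `a'` covers `a` in `{a | P a}` ordered by `le`. -/
def CoversOn {α : Type*} (P : α → Prop) (le : α → α → Prop) : α → α → Prop :=
  CoversOnMod P (· = ·) le

/-- `ρ` is a rank on `{a | P a}` ordered by `le`. -/
def IsRankOn {α : Type*} (P : α → Prop) (le : α → α → Prop) (ρ : α → ℕ) : Prop :=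
  IsRankOnMod P (· = ·) le ρ

/-- `f` is a quotient of posets from `({a | P a}, lea)` onto `({b | Q b}, leb)`:
an order-preserving surjection such that any relation downstairs lifts to a
relation upstairs. -/
def IsPosetQuotient {α β : Type*} (P : α → Prop) (Q : β → Prop)
    (lea : α → α → Prop) (leb : β → β → Prop) (f : α → β) : Prop :=
  (∀ a, P a → Q (f a)) ∧
  (∀ a a', P a → P a' → lea a a' → leb (f a) (f a')) ∧
  (∀ b, Q b → ∃ a, P a ∧ f a = b) ∧
  (∀ b b', Q b → Q b' → leb b b' →
    ∃ a a', P a ∧ P a' ∧ f a = b ∧ f a' = b' ∧ lea a a')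

/-! ### Structures over the moduli of stable graphs -/

/-- Pairs `(G, S)` with `G` stable of genus `g` and `S ∈ A^b_G`. -/
noncomputable def PairStab (g b : ℕ) (p : WGraph × Finset ℕ) : Prop :=
  p.1.Stable g ∧ p.1.Ab b p.2

/-- Isomorphism of pairs `(G, S)`. -/
def PairIso (p q : WGraph × Finset ℕ) : Prop :=
  ∃ fV fE, p.1.IsoMaps q.1 fV fE ∧ p.2.image fE = q.2

/-- The order on `A^b_g`: `(G,S) ≤ (H,T)` iff there is a contraction
`γ : G → H` (a contraction of `G` followed by an isomorphism onto `H`) with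
`γ* T ⊆ S`. -/
noncomputable def AgLE (b : ℕ) (p q : WGraph × Finset ℕ) : Prop :=
  ∃ S₀ ⊆ p.1.E, ∃ fV fE, (p.1.contract S₀).IsoMaps q.1 fV fE ∧
    p.1.pullStar b (((p.1.contract S₀).E).filter fun e => fE e ∈ q.2) ⊆ p.2

/-- Triples `(G, S, O̅_S)` with `G` stable of genus `g`, `S ∈ A^b_G` and
`O_S ∈ 𝒪^b(G−S)` (representing elements of `𝒪̄𝒫^b_g`). -/
noncomputable def TripP (g b : ℕ) (x : WGraph × Finset ℕ × Orient) : Prop :=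
  x.1.Stable g ∧ x.1.Ab b x.2.1 ∧ x.1.MemOb x.2.1 b x.2.2

/-- Identification of triples: an isomorphism of the underlying graphs
carrying the subgraph and the class of the orientation (i.e. its divisor) of
one to the other. -/
noncomputable def TripEq (b : ℕ) (x y : WGraph × Finset ℕ × Orient) : Prop :=
  ∃ fV fE, x.1.IsoMaps y.1 fV fE ∧ x.2.1.image fE = y.2.1 ∧
    ∀ v ∈ x.1.V, y.1.divOr y.2.1 b y.2.2 (fV v) = x.1.divOr x.2.1 b x.2.2 v

/-- The order on `𝒪̄𝒫^b_g`: `(G, O̅_S) ≤ (H, O̅_T)` iff there is a contraction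
`γ : G → H` with `γ* T ⊆ S` and `γ̄_* O̅_S ≤ O̅_T`, the latter meaning that the
restriction of `O̅_T` to `H − γ_* S` equals `γ̄_* O̅_S` (compared through the
isomorphism, via the divisors). -/
noncomputable def OPgLE (b : ℕ) (x y : WGraph × Finset ℕ × Orient) : Prop :=
  ∃ S₀ ⊆ x.1.E, ∃ fV fE, (x.1.contract S₀).IsoMaps y.1 fV fE ∧
    x.1.pullStar b (((x.1.contract S₀).E).filter fun e => fE e ∈ y.2.1) ⊆ x.2.1 ∧
    ∃ O', x.1.equivOr x.2.1 b O' x.2.2 ∧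
      ((∀ e ∈ S₀, O' e ≠ some EdgeDir.bi) ∨ x.1.E \ (S₀ ∪ x.2.1) = ∅) ∧
      ∀ v ∈ (x.1.contract S₀).V,
        y.1.divOr ((x.2.1 \ S₀).image fE) b
            (restr y.2.2 (y.1.E \ (x.2.1 \ S₀).image fE)) (fV v)
          = (x.1.contract S₀).divOr (x.2.1 \ S₀) b
              (restr O' (x.1.E \ (S₀ ∪ x.2.1))) v

section QuotLemmas
variable {α : Type*}

theorem eqvGen_iff_rtg {r : α → α → Prop} (hs : Symmetric r) {a b : α} :
    Relation.EqvGen r a b ↔ Relation.ReflTransGen r a b := by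
  constructor
  · intro h
    induction h with
    | rel x y h => exact Relation.ReflTransGen.single h
    | refl x => exact .refl
    | symm x y _ ih => exact @Std.Symm.symm _ _ (@Relation.ReflTransGen.stdSymm _ _ ⟨fun _ _ h => hs h⟩) _ _ ih
    | trans x y z _ _ ih1 ih2 => exact ih1.trans ih2
  · intro h
    induction h with
    | refl => exact .refl _
    | tail _ h ih => exact ih.trans _ _ _ (.rel _ _ h)

theorem qcard_mono [Finite α] {r s : α → α → Prop} (h : ∀ x y, r x y → s x y) :
    Nat.card (Quot s) ≤ Nat.card (Quot r) := by
  have hsurj : Function.Surjective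
      (fun q : Quot r => Quot.lift (Quot.mk s) (fun a b hab => Quot.sound (h a b hab)) q) := by
    intro q
    obtain ⟨a, rfl⟩ := Quot.exists_rep q
    exact ⟨Quot.mk r a, rfl⟩
  exact Nat.card_le_card_of_surjective _ hsurj

theorem qcard_congr {r s : α → α → Prop} (h : ∀ x y, r x y ↔ s x y) :
    Nat.card (Quot r) = Nat.card (Quot s) := by
  have : r = s := by funext x y; exact propext (h x y)
  subst this; rfl

theorem nat_card_option (β : Type*) [Finite β] : Nat.card (Option β) = Nat.card β + 1 := by
  have := Fintype.ofFinite β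
  rw [Nat.card_eq_fintype_card, Nat.card_eq_fintype_card, Fintype.card_option]

theorem eqvGen_bot {r : α → α → Prop} (h : ∀ x y, ¬ r x y) {a b : α}
    (hab : Relation.EqvGen r a b) : a = b := by
  induction hab with
  | rel x y hxy => exact absurd hxy (h x y)
  | refl => rfl
  | symm _ _ _ ih => exact ih.symm
  | trans _ _ _ _ _ ih1 ih2 => exact ih1.trans ih2

theorem qcard_merge [Finite α] {r s : α → α → Prop} (p q : α)
    (h : ∀ x y, s x y ↔ r x y ∨ (x = p ∧ y = q) ∨ (x = q ∧ y = p)) :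
    Nat.card (Quot r) ≤ Nat.card (Quot s) + 1 := by
  classical
  have E1 : ∀ x y, Relation.EqvGen s x y → Relation.EqvGen r x y ∨
      ((Relation.EqvGen r x p ∨ Relation.EqvGen r x q) ∧
       (Relation.EqvGen r y p ∨ Relation.EqvGen r y q)) := by
    intro x y hxy
    induction hxy with
    | rel a b hab =>
      rcases (h a b).1 hab with h' | ⟨rfl, rfl⟩ | ⟨rfl, rfl⟩
      · exact Or.inl (.rel _ _ h')
      · exact Or.inr ⟨Or.inl (.refl _), Or.inr (.refl _)⟩
      · exact Or.inr ⟨Or.inr (.refl _), Or.inl (.refl _)⟩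
    | refl a => exact Or.inl (.refl _)
    | symm a b _ ih =>
      rcases ih with h' | ⟨h1, h2⟩
      · exact Or.inl (h'.symm _ _)
      · exact Or.inr ⟨h2, h1⟩
    | trans a b c _ _ ih1 ih2 =>
      rcases ih1 with h1 | ⟨h1a, h1b⟩
      · rcases ih2 with h2 | ⟨h2a, h2b⟩
        · exact Or.inl (h1.trans _ _ _ h2)
        · exact Or.inr ⟨h2a.imp (h1.trans _ _ _) (h1.trans _ _ _), h2b⟩
      · rcases ih2 with h2 | ⟨h2a, h2b⟩
        · exact Or.inr ⟨h1a, h1b.imp (fun hb => (h2.symm _ _).trans _ _ _ hb |>.symm _ _ |>.symm _ _) (fun hb => (h2.symm _ _).trans _ _ _ hb)⟩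
        · exact Or.inr ⟨h1a, h2b⟩
  set f : Quot r → Quot s := fun x =>
    Quot.lift (Quot.mk s) (fun a b hab => Quot.sound ((h a b).2 (Or.inl hab))) x with hf
  set g : Quot r → Option (Quot s) := fun x =>
    if x = Quot.mk r q then none else some (f x) with hg
  have hginj : Function.Injective g := by
    intro x y hxy
    simp only [hg] at hxy
    by_cases hx : x = Quot.mk r q <;> by_cases hy : y = Quot.mk r q
    · rw [hx, hy]
    · simp only [if_pos hx, if_neg hy] at hxy; exact absurd hxy.symm (Option.some_ne_none _)
    · simp only [if_neg hx, if_pos hy] at hxy; exact absurd hxy (Option.some_ne_none _)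
    · simp only [if_neg hx, if_neg hy, Option.some_inj] at hxy
      obtain ⟨u, rfl⟩ := Quot.exists_rep x
      obtain ⟨v, rfl⟩ := Quot.exists_rep y
      have huv : Relation.EqvGen s u v := Quot.eq.1 hxy
      rcases E1 u v huv with h' | ⟨hu, hv⟩
      · exact Quot.eq.2 h'
      · have hup : Relation.EqvGen r u p := by
          rcases hu with h' | h'
          · exact h'
          · exact absurd (Quot.eq.2 h') hx
        have hvp : Relation.EqvGen r v p := by
          rcases hv with h' | h'
          · exact h'
          · exact absurd (Quot.eq.2 h') hy
        exact Quot.eq.2 (hup.trans _ _ _ (hvp.symm _ _))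
  have := Fintype.ofFinite (Quot s)
  calc Nat.card (Quot r) ≤ Nat.card (Option (Quot s)) :=
        Nat.card_le_card_of_injective g hginj
    _ = Nat.card (Quot s) + 1 := nat_card_option _

theorem qcard_eq_one {r : α → α → Prop} (hne : Nonempty α)
    (h : ∀ a b : α, Quot.mk r a = Quot.mk r b) : Nat.card (Quot r) = 1 := by
  rw [Nat.card_eq_one_iff_unique]
  refine ⟨⟨fun x y => ?_⟩, ⟨Quot.mk r hne.some⟩⟩
  obtain ⟨a, rfl⟩ := Quot.exists_rep x
  obtain ⟨b, rfl⟩ := Quot.exists_rep y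
  exact h a b

theorem qcard_bot [Finite α] {r : α → α → Prop} (h : ∀ x y, ¬ r x y) :
    Nat.card (Quot r) = Nat.card α := by
  refine (Nat.card_eq_of_bijective (Quot.mk r)
    ⟨fun a b hab => eqvGen_bot h (Quot.eq.1 hab), fun q => Quot.exists_rep q⟩).symm

end QuotLemmas
namespace WGraph

variable (G : WGraph)

/-- The relation whose quotient count is `ncomp`. -/
def crel (W F : Finset ℕ) : {x : ℕ // x ∈ W} → {x : ℕ // x ∈ W} → Prop :=
  fun u v => G.adjOn F u.1 v.1

theorem ncomp_def (W F : Finset ℕ) : G.ncomp W F = Nat.card (Quot (G.crel W F)) := rfl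

variable {G}

theorem adjOn_symm {F : Finset ℕ} : Symmetric (G.adjOn F) := by
  rintro u v ⟨e, he, h | h⟩
  · exact ⟨e, he, Or.inr h⟩
  · exact ⟨e, he, Or.inl h⟩

theorem crel_symm {W F : Finset ℕ} : Symmetric (G.crel W F) :=
  fun _ _ h => adjOn_symm h

theorem conRel_eq_adjOn (S : Finset ℕ) : G.conRel S = G.adjOn S := rfl

theorem adjOn_mem_V {F : Finset ℕ} {u v : ℕ} (h : G.adjOn F u v) : u ∈ G.V ∧ v ∈ G.V := by
  obtain ⟨e, he, h | h⟩ := h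
  · have := G.ends_mem e (Finset.mem_inter.1 he).2
    rw [h] at this; exact this
  · have := G.ends_mem e (Finset.mem_inter.1 he).2
    rw [h] at this; exact ⟨this.2, this.1⟩

theorem eqvGen_mem_V {F : Finset ℕ} {u v : ℕ} (h : Relation.EqvGen (G.adjOn F) u v) :
    u = v ∨ (u ∈ G.V ∧ v ∈ G.V) := by
  induction h with
  | rel x y h => exact Or.inr (adjOn_mem_V h)
  | refl x => exact Or.inl rfl
  | symm x y _ ih => rcases ih with rfl | ⟨h1, h2⟩
                     · exact Or.inl rfl
                     · exact Or.inr ⟨h2, h1⟩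
  | trans x y z _ _ ih1 ih2 =>
    rcases ih1 with rfl | ⟨h1, h2⟩
    · exact ih2
    · rcases ih2 with rfl | ⟨h3, h4⟩
      · exact Or.inr ⟨h1, h2⟩
      · exact Or.inr ⟨h1, h4⟩

theorem adjOn_mono {F F' : Finset ℕ} (h : F ⊆ F') {u v : ℕ} (huv : G.adjOn F u v) :
    G.adjOn F' u v := by
  obtain ⟨e, he, hh⟩ := huv
  rw [Finset.mem_inter] at he
  exact ⟨e, Finset.mem_inter.2 ⟨h he.1, he.2⟩, hh⟩

/-! crep lemmas. -/

theorem crep_spec (S : Finset ℕ) (v : ℕ) : Relation.EqvGen (G.adjOn S) (G.crep S v) v :=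
  Nat.sInf_mem (⟨v, Relation.EqvGen.refl v⟩ : {u | Relation.EqvGen (G.conRel S) u v}.Nonempty)

theorem crep_eq_of_eqvGen {S : Finset ℕ} {u v : ℕ} (h : Relation.EqvGen (G.adjOn S) u v) :
    G.crep S u = G.crep S v := by
  unfold WGraph.crep
  congr 1
  ext z
  exact ⟨fun hz => hz.trans _ _ _ h, fun hz => hz.trans _ _ _ (h.symm _ _)⟩

theorem eqvGen_of_crep_eq {S : Finset ℕ} {u v : ℕ} (h : G.crep S u = G.crep S v) :
    Relation.EqvGen (G.adjOn S) u v :=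
  ((crep_spec S u).symm _ _).trans _ _ _ (h ▸ crep_spec S v)

theorem crep_idem (S : Finset ℕ) (v : ℕ) : G.crep S (G.crep S v) = G.crep S v :=
  crep_eq_of_eqvGen (crep_spec S v)

theorem crep_mem_V {S : Finset ℕ} {v : ℕ} (hv : v ∈ G.V) : G.crep S v ∈ G.V := by
  rcases eqvGen_mem_V (crep_spec S v) with h | h
  · rw [h]; exact hv
  · exact h.1

/-! Fibers of contraction. -/

variable (G) in
/-- The fiber of the contraction map over `x`. -/
noncomputable def fib (S : Finset ℕ) (x : ℕ) : Finset ℕ := G.V.filter fun u => G.crep S u = x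

theorem mem_fib {S : Finset ℕ} {x u : ℕ} :
    u ∈ G.fib S x ↔ u ∈ G.V ∧ G.crep S u = x := Finset.mem_filter

theorem mem_fib_self {S : Finset ℕ} {x : ℕ} (hx : x ∈ G.V.image (G.crep S)) :
    x ∈ G.fib S x := by
  obtain ⟨u, hu, rfl⟩ := Finset.mem_image.1 hx
  exact mem_fib.2 ⟨crep_mem_V hu, crep_idem S u⟩

/-- Walks along `S`-edges stay in a fiber and connect inside it. -/
theorem walk_transfer {S : Finset ℕ} {x : ℕ} {a b : ℕ}
    (hab : Relation.ReflTransGen (G.adjOn S) a b) (ha : a ∈ G.fib S x) :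
    ∃ hb : b ∈ G.fib S x,
      Quot.mk (G.crel (G.fib S x) (G.indEdges (G.E \ S) (G.fib S x))) ⟨a, ha⟩ =
      Quot.mk _ ⟨b, hb⟩ := by
  induction hab with
  | refl => exact ⟨ha, rfl⟩
  | @tail b c hab hbc ih =>
    obtain ⟨hb, hmk⟩ := ih
    have hcV := (adjOn_mem_V hbc).2
    have hcrep : G.crep S b = G.crep S c := crep_eq_of_eqvGen (.rel _ _ hbc)
    have hc : c ∈ G.fib S x := mem_fib.2 ⟨hcV, hcrep ▸ (mem_fib.1 hb).2⟩
    refine ⟨hc, hmk.trans (Quot.sound ?_)⟩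
    obtain ⟨e, he, hh⟩ := hbc
    rw [Finset.mem_inter] at he
    refine ⟨e, Finset.mem_inter.2 ⟨?_, he.2⟩, hh⟩
    have hends : ((G.ends e).1 ∈ G.fib S x) ∧ ((G.ends e).2 ∈ G.fib S x) := by
      rcases hh with h | h <;> rw [h] <;> exact ⟨by assumption, by assumption⟩
    unfold WGraph.indEdges
    simp only [Finset.mem_filter, Finset.mem_sdiff, not_and, not_not]
    exact ⟨⟨he.2, fun _ => he.1⟩, hends.1, hends.2⟩

/-- Each nonempty fiber of the contraction is connected (by its inner `S`-edges). -/
theorem fib_connected {S : Finset ℕ} {x : ℕ} (hx : x ∈ G.V.image (G.crep S)) :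
    G.ncomp (G.fib S x) (G.indEdges (G.E \ S) (G.fib S x)) = 1 := by
  rw [ncomp_def]
  refine qcard_eq_one ⟨⟨x, mem_fib_self hx⟩⟩ fun a b => ?_
  have hab : Relation.EqvGen (G.adjOn S) a.1 b.1 := by
    apply eqvGen_of_crep_eq
    rw [(mem_fib.1 a.2).2, (mem_fib.1 b.2).2]
  obtain ⟨hb, hmk⟩ := walk_transfer ((eqvGen_iff_rtg adjOn_symm).1 hab) a.2
  convert hmk using 2

/-! Connectivity bound (spanning forest bound). -/

theorem card_le_edges_add_ncomp (G : WGraph) (W F : Finset ℕ) :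
    W.card ≤ (F ∩ G.E).card + G.ncomp W F := by
  classical
  generalize hn : (F ∩ G.E).card = n
  induction n generalizing F with
  | zero =>
    have hFE : F ∩ G.E = ∅ := Finset.card_eq_zero.1 hn
    have hbot : ∀ x y : {z : ℕ // z ∈ W}, ¬ G.crel W F x y := by
      rintro x y ⟨e, he, -⟩
      rw [hFE] at he
      exact absurd he (Finset.notMem_empty e)
    rw [ncomp_def, qcard_bot hbot, Nat.card_eq_fintype_card, Fintype.card_coe]
    omega
  | succ n ih =>
    have hne : (F ∩ G.E).Nonempty := by
      rw [← Finset.card_pos, hn]; omega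
    obtain ⟨e, he⟩ := hne
    set F' := F.erase e with hF'
    have hF'E : F' ∩ G.E = (F ∩ G.E).erase e := by
      ext f
      simp only [hF', Finset.mem_inter, Finset.mem_erase]
      tauto
    have hcard' : (F' ∩ G.E).card = n := by
      rw [hF'E, Finset.card_erase_of_mem he, hn]
      omega
    have hstep : ∀ u v : ℕ, G.adjOn F u v ↔
        G.adjOn F' u v ∨ (G.ends e = (u, v) ∨ G.ends e = (v, u)) := by
      intro u v
      constructor
      · rintro ⟨f, hf, hh⟩
        rw [Finset.mem_inter] at hf
        by_cases hfe : f = e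
        · subst hfe; exact Or.inr hh
        · exact Or.inl ⟨f, Finset.mem_inter.2 ⟨Finset.mem_erase.2 ⟨hfe, hf.1⟩, hf.2⟩, hh⟩
      · rintro (⟨f, hf, hh⟩ | hh)
        · rw [Finset.mem_inter] at hf
          exact ⟨f, Finset.mem_inter.2 ⟨Finset.mem_of_mem_erase hf.1, hf.2⟩, hh⟩
        · exact ⟨e, he, hh⟩
    have hboth : G.ncomp W F' ≤ G.ncomp W F + 1 := by
      by_cases hp : (G.ends e).1 ∈ W ∧ (G.ends e).2 ∈ W
      · rw [ncomp_def, ncomp_def]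
        refine qcard_merge (r := G.crel W F') (⟨(G.ends e).1, hp.1⟩ : {z : ℕ // z ∈ W})
          ⟨(G.ends e).2, hp.2⟩ fun x y => ?_
        rw [show G.crel W F x y = G.adjOn F x.1 y.1 from rfl, hstep]
        constructor
        · rintro (h | h | h)
          · exact Or.inl h
          · exact Or.inr (Or.inl ⟨Subtype.ext (by simp [h]), Subtype.ext (by simp [h])⟩)
          · exact Or.inr (Or.inr ⟨Subtype.ext (by simp [h]), Subtype.ext (by simp [h])⟩)
        · rintro (h | ⟨rfl, rfl⟩ | ⟨rfl, rfl⟩)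
          · exact Or.inl h
          · exact Or.inr (Or.inl rfl)
          · exact Or.inr (Or.inr rfl)
      · have : ∀ x y : {z : ℕ // z ∈ W}, G.crel W F x y ↔ G.crel W F' x y := by
          intro x y
          rw [show G.crel W F x y = G.adjOn F x.1 y.1 from rfl,
              show G.crel W F' x y = G.adjOn F' x.1 y.1 from rfl, hstep]
          constructor
          · rintro (h | h | h)
            · exact h
            · exact absurd ⟨h ▸ x.2, h ▸ y.2⟩ hp
            · exact absurd ⟨h ▸ y.2, h ▸ x.2⟩ hp
          · exact Or.inl
        rw [ncomp_def, ncomp_def, qcard_congr this]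
        omega
    have := ih F' hcard'
    omega

theorem subGenus_nonneg (G : WGraph) (W F : Finset ℕ) : 0 ≤ G.subGenus W F := by
  unfold WGraph.subGenus
  have h1 : 0 ≤ ∑ v ∈ W, (G.w v : ℤ) := Finset.sum_nonneg fun v _ => Int.ofNat_nonneg _
  have h2 := card_le_edges_add_ncomp G W F
  push_cast
  omega

theorem subGenus_toNat (G : WGraph) (W F : Finset ℕ) :
    ((G.subGenus W F).toNat : ℤ) = G.subGenus W F :=
  Int.toNat_of_nonneg (subGenus_nonneg G W F)

end WGraph
namespace WGraph

variable {G : WGraph}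

theorem mem_indEdges {S Z : Finset ℕ} {e : ℕ} :
    e ∈ G.indEdges S Z ↔ (e ∈ G.E ∧ e ∉ S) ∧ (G.ends e).1 ∈ Z ∧ (G.ends e).2 ∈ Z := by
  unfold WGraph.indEdges
  simp [Finset.mem_filter, Finset.mem_sdiff, and_assoc]

theorem contract_V (S : Finset ℕ) : (G.contract S).V = G.V.image (G.crep S) := rfl
theorem contract_E (S : Finset ℕ) : (G.contract S).E = G.E \ S := rfl
theorem contract_ends (S : Finset ℕ) (e : ℕ) :
    (G.contract S).ends e = (G.crep S (G.ends e).1, G.crep S (G.ends e).2) := rfl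
theorem contract_w (S : Finset ℕ) (v : ℕ) :
    (G.contract S).w v =
      (G.subGenus (G.fib S v) (G.indEdges (G.E \ S) (G.fib S v))).toNat := rfl

section ML

variable {S T A : Finset ℕ}
variable (hS : S ⊆ G.E) (hT : T ⊆ G.E \ S) (hA : A ⊆ G.V)
variable (hsat : ∀ u ∈ A, ∀ v ∈ G.V, Relation.EqvGen (G.adjOn S) u v → v ∈ A)

/-- The edge set of `(G−(E∖(S∪T)))[A]`, i.e. the `(S∪T)`-edges inside `A`. -/
theorem mem_FA {e : ℕ} : e ∈ G.indEdges (G.E \ (S ∪ T)) A ↔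
    e ∈ G.E ∧ e ∈ S ∪ T ∧ (G.ends e).1 ∈ A ∧ (G.ends e).2 ∈ A := by
  rw [mem_indEdges]
  simp only [Finset.mem_sdiff, not_and, not_not]
  tauto

theorem mem_FB {e : ℕ} : e ∈ (G.contract S).indEdges ((G.contract S).E \ T) (A.image (G.crep S)) ↔
    e ∈ G.E \ S ∧ e ∈ T ∧ G.crep S (G.ends e).1 ∈ A.image (G.crep S) ∧
      G.crep S (G.ends e).2 ∈ A.image (G.crep S) := by
  rw [mem_indEdges]
  simp only [contract_E, contract_ends, Finset.mem_sdiff, not_and, not_not]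
  tauto

include hsat hA in
theorem fib_subset_of_mem {x : ℕ} (hx : x ∈ A.image (G.crep S)) : G.fib S x ⊆ A := by
  intro u hu
  obtain ⟨a, ha, rfl⟩ := Finset.mem_image.1 hx
  obtain ⟨huV, hcrep⟩ := mem_fib.1 hu
  exact hsat a ha u huV (eqvGen_of_crep_eq hcrep.symm)

include hsat hA in
theorem A_eq_biUnion : A = (A.image (G.crep S)).biUnion (G.fib S) := by
  classical
  ext u
  constructor
  · intro hu
    exact Finset.mem_biUnion.2 ⟨G.crep S u, Finset.mem_image_of_mem _ hu,
      mem_fib.2 ⟨hA hu, rfl⟩⟩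
  · intro hu
    obtain ⟨x, hx, hux⟩ := Finset.mem_biUnion.1 hu
    exact fib_subset_of_mem hA hsat hx hux

theorem fib_disjoint {x y : ℕ} (hxy : x ≠ y) : Disjoint (G.fib S x) (G.fib S y) := by
  rw [Finset.disjoint_left]
  intro u hux huy
  exact hxy ((mem_fib.1 hux).2.symm.trans (mem_fib.1 huy).2)

include hA hsat in
theorem ends_mem_A_iff {e : ℕ} (he : e ∈ G.E) :
    ((G.ends e).1 ∈ A ∧ (G.ends e).2 ∈ A) ↔
      (G.crep S (G.ends e).1 ∈ A.image (G.crep S) ∧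
       G.crep S (G.ends e).2 ∈ A.image (G.crep S)) := by
  constructor
  · rintro ⟨h1, h2⟩
    exact ⟨Finset.mem_image_of_mem _ h1, Finset.mem_image_of_mem _ h2⟩
  · rintro ⟨h1, h2⟩
    obtain ⟨a1, ha1, hg1⟩ := Finset.mem_image.1 h1
    obtain ⟨a2, ha2, hg2⟩ := Finset.mem_image.1 h2
    have hV := G.ends_mem e he
    exact ⟨hsat a1 ha1 _ hV.1 (eqvGen_of_crep_eq hg1),
           hsat a2 ha2 _ hV.2 (eqvGen_of_crep_eq hg2)⟩

include hA hsat in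
/-- Walking within an equivalence class stays in `A` and preserves the component. -/
theorem class_mk_eq {u v : ℕ}
    (huv : Relation.ReflTransGen (G.adjOn S) u v) (hu : u ∈ A) :
    ∃ hv : v ∈ A, Quot.mk (G.crel A (G.indEdges (G.E \ (S ∪ T)) A)) ⟨u, hu⟩ =
      Quot.mk _ ⟨v, hv⟩ := by
  induction huv with
  | refl => exact ⟨hu, rfl⟩
  | @tail b c hab hbc ih =>
    obtain ⟨hb, hmk⟩ := ih
    have hcV := (adjOn_mem_V hbc).2
    have hc : c ∈ A := hsat b hb c hcV (.rel _ _ hbc)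
    refine ⟨hc, hmk.trans (Quot.sound ?_)⟩
    obtain ⟨e, he, hh⟩ := hbc
    rw [Finset.mem_inter] at he
    refine ⟨e, Finset.mem_inter.2 ⟨?_, he.2⟩, hh⟩
    rw [mem_FA]
    have hends : (G.ends e).1 ∈ A ∧ (G.ends e).2 ∈ A := by
      rcases hh with h | h <;> rw [h] <;> exact ⟨by assumption, by assumption⟩
    exact ⟨he.2, Finset.mem_union_left _ he.1, hends⟩

include hS hT hA hsat in
/-- Contraction preserves the number of connected components (saturated version). -/
theorem ncomp_contract :
    (G.contract S).ncomp (A.image (G.crep S))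
        ((G.contract S).indEdges ((G.contract S).E \ T) (A.image (G.crep S))) =
      G.ncomp A (G.indEdges (G.E \ (S ∪ T)) A) := by
  classical
  set B := A.image (G.crep S) with hB
  set FA := G.indEdges (G.E \ (S ∪ T)) A with hFA
  set FB := (G.contract S).indEdges ((G.contract S).E \ T) B with hFB
  -- the induced map on components
  have hmaps : ∀ z : {x : ℕ // x ∈ A}, G.crep S z.1 ∈ B :=
    fun z => Finset.mem_image_of_mem _ z.2
  have hsound : ∀ z z' : {x : ℕ // x ∈ A}, G.crel A FA z z' →
      Quot.mk ((G.contract S).crel B FB) ⟨G.crep S z.1, hmaps z⟩ = Quot.mk _ ⟨G.crep S z'.1, hmaps z'⟩ := by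
    rintro z z' ⟨e, he, hh⟩
    rw [Finset.mem_inter] at he
    have heFA : e ∈ G.indEdges (G.E \ (S ∪ T)) A := he.1
    rw [mem_FA] at heFA
    obtain ⟨heE, heST, hA1, hA2⟩ := heFA
    rcases Finset.mem_union.1 heST with heS | heT
    · -- contracted edge: images are equal
      have : G.crep S z.1 = G.crep S z'.1 := by
        apply crep_eq_of_eqvGen
        refine Relation.EqvGen.rel _ _ ⟨e, Finset.mem_inter.2 ⟨heS, heE⟩, hh⟩
      congr 1
      exact Subtype.ext this
    · -- surviving edge: adjacency downstairs
      apply Quot.sound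
      refine ⟨e, Finset.mem_inter.2 ⟨?_, ?_⟩, ?_⟩
      · rw [hFB, mem_FB]
        refine ⟨hT heT, heT, ?_, ?_⟩ <;>
          [exact Finset.mem_image_of_mem _ hA1; exact Finset.mem_image_of_mem _ hA2]
      · exact hT heT
      · rcases hh with h | h
        · exact Or.inl (by rw [contract_ends, h])
        · exact Or.inr (by rw [contract_ends, h])
  set φ : Quot (G.crel A FA) → Quot ((G.contract S).crel B FB) :=
    Quot.lift (fun z => Quot.mk ((G.contract S).crel B FB) ⟨G.crep S z.1, hmaps z⟩) hsound with hφ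
  -- path lifting
  have hlift : ∀ p q : {x : ℕ // x ∈ B}, Relation.ReflTransGen ((G.contract S).crel B FB) p q →
      ∀ z : {x : ℕ // x ∈ A}, G.crep S z.1 = p.1 →
        ∃ z' : {x : ℕ // x ∈ A}, G.crep S z'.1 = q.1 ∧
          Quot.mk (G.crel A FA) z = Quot.mk _ z' := by
    intro p q hpq
    induction hpq with
    | refl => exact fun z hz => ⟨z, hz, rfl⟩
    | @tail m m' hm hstep ih =>
      intro z hz
      obtain ⟨z1, hz1, hmk1⟩ := ih z hz
      obtain ⟨e, he, hh⟩ := hstep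
      rw [Finset.mem_inter] at he
      have heFB : e ∈ (G.contract S).indEdges ((G.contract S).E \ T) (A.image (G.crep S)) := he.1
      rw [mem_FB] at heFB
      obtain ⟨heES, heT, hB1, hB2⟩ := heFB
      have heE : e ∈ G.E := (Finset.mem_sdiff.1 heES).1
      have hVe := G.ends_mem e heE
      have hendsA : (G.ends e).1 ∈ A ∧ (G.ends e).2 ∈ A :=
        (ends_mem_A_iff hA hsat heE).2 ⟨hB1, hB2⟩
      have hFAe : e ∈ FA := by
        rw [hFA, mem_FA]
        exact ⟨heE, Finset.mem_union_right _ heT, hendsA⟩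
      rcases hh with h | h
      · -- contract.ends e = (m.1, m'.1)
        rw [contract_ends] at h
        have h1 : G.crep S (G.ends e).1 = m.1 := congrArg Prod.fst h
        have h2 : G.crep S (G.ends e).2 = m'.1 := congrArg Prod.snd h
        have heq : Relation.EqvGen (G.adjOn S) z1.1 (G.ends e).1 :=
          eqvGen_of_crep_eq (by rw [hz1, ← h1])
        obtain ⟨ha, hmk2⟩ := class_mk_eq (T := T) hA hsat
          ((eqvGen_iff_rtg adjOn_symm).1 heq) z1.2
        refine ⟨⟨(G.ends e).2, hendsA.2⟩, h2, ?_⟩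
        rw [hmk1, hmk2]
        exact Quot.sound ⟨e, Finset.mem_inter.2 ⟨hFAe, heE⟩, Or.inl rfl⟩
      · rw [contract_ends] at h
        have h1 : G.crep S (G.ends e).1 = m'.1 := congrArg Prod.fst h
        have h2 : G.crep S (G.ends e).2 = m.1 := congrArg Prod.snd h
        have heq : Relation.EqvGen (G.adjOn S) z1.1 (G.ends e).2 :=
          eqvGen_of_crep_eq (by rw [hz1, ← h2])
        obtain ⟨ha, hmk2⟩ := class_mk_eq (T := T) hA hsat
          ((eqvGen_iff_rtg adjOn_symm).1 heq) z1.2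
        refine ⟨⟨(G.ends e).1, hendsA.1⟩, h1, ?_⟩
        rw [hmk1, hmk2]
        exact Quot.sound ⟨e, Finset.mem_inter.2 ⟨hFAe, heE⟩, Or.inr rfl⟩
  have hbij : Function.Bijective φ := by
    constructor
    · intro x y hxy
      obtain ⟨z, rfl⟩ := Quot.exists_rep x
      obtain ⟨z', rfl⟩ := Quot.exists_rep y
      have : Quot.mk ((G.contract S).crel B FB) ⟨G.crep S z.1, hmaps z⟩ =
          Quot.mk _ ⟨G.crep S z'.1, hmaps z'⟩ := hxy
      have hrtg := (eqvGen_iff_rtg (crel_symm (G := G.contract S))).1 (Quot.eq.1 this)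
      obtain ⟨z'', hz'', hmk⟩ := hlift _ _ hrtg z rfl
      have heq : Relation.EqvGen (G.adjOn S) z''.1 z'.1 :=
        eqvGen_of_crep_eq (by rw [hz''])
      obtain ⟨ha, hmk2⟩ := class_mk_eq (T := T) hA hsat
        ((eqvGen_iff_rtg adjOn_symm).1 heq) z''.2
      rw [hmk, hmk2]
    · intro q
      obtain ⟨b, rfl⟩ := Quot.exists_rep q
      obtain ⟨a, ha, hab⟩ := Finset.mem_image.1 b.2
      refine ⟨Quot.mk _ ⟨a, ha⟩, ?_⟩
      have hred : φ (Quot.mk _ ⟨a, ha⟩) =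
          Quot.mk ((G.contract S).crel B FB) ⟨G.crep S a, hmaps ⟨a, ha⟩⟩ := rfl
      rw [hred]
      exact congrArg _ (Subtype.ext hab)
  rw [ncomp_def, ncomp_def]
  exact (Nat.card_eq_of_bijective φ hbij).symm

include hS hT hA hsat in
/-- Contraction preserves the genus of saturated induced subgraphs. -/
theorem subGenus_contract :
    (G.contract S).subGenus (A.image (G.crep S))
        ((G.contract S).indEdges ((G.contract S).E \ T) (A.image (G.crep S))) =
      G.subGenus A (G.indEdges (G.E \ (S ∪ T)) A) := by
  classical
  set ESA := (G.E ∩ S).filter (fun e => (G.ends e).1 ∈ A ∧ (G.ends e).2 ∈ A) with hESA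
  -- weights of contracted vertices
  have hwx : ∀ x ∈ A.image (G.crep S), ((G.contract S).w x : ℤ) =
      (∑ v ∈ G.fib S x, (G.w v : ℤ)) - ((G.fib S x).card : ℤ) +
        (((G.indEdges (G.E \ S) (G.fib S x)) ∩ G.E).card : ℤ) + 1 := by
    intro x hx
    have hxim : x ∈ G.V.image (G.crep S) := by
      obtain ⟨a, ha, rfl⟩ := Finset.mem_image.1 hx
      exact Finset.mem_image_of_mem _ (hA ha)
    rw [contract_w, subGenus_toNat]
    unfold WGraph.subGenus
    rw [fib_connected hxim]
    push_cast
    ring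
  -- fibers partition A
  have hdisj : ∀ x ∈ A.image (G.crep S), ∀ y ∈ A.image (G.crep S), x ≠ y →
      Disjoint (G.fib S x) (G.fib S y) :=
    fun x _ y _ hxy => fib_disjoint hxy
  have hAB : A = (A.image (G.crep S)).biUnion (G.fib S) := A_eq_biUnion hA hsat
  have hsumw : ∑ x ∈ A.image (G.crep S), ∑ v ∈ G.fib S x, (G.w v : ℤ) =
      ∑ v ∈ A, (G.w v : ℤ) := by
    conv_rhs => rw [hAB]
    rw [Finset.sum_biUnion]
    intro x hx y hy hxy
    exact hdisj x hx y hy hxy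
  have hsumcard : ∑ x ∈ A.image (G.crep S), ((G.fib S x).card : ℤ) = (A.card : ℤ) := by
    have : A.card = ∑ x ∈ A.image (G.crep S), (G.fib S x).card := by
      conv_lhs => rw [hAB]
      exact Finset.card_biUnion hdisj
    rw [this]
    push_cast
    rfl
  -- inner S-edges partition
  have hfibE : ∀ x ∈ A.image (G.crep S), (G.indEdges (G.E \ S) (G.fib S x)) ∩ G.E =
      ESA.filter (fun e => G.crep S (G.ends e).1 = x) := by
    intro x hx
    ext e
    rw [Finset.mem_inter, mem_indEdges, hESA, Finset.mem_filter, Finset.mem_filter,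
      Finset.mem_inter]
    simp only [Finset.mem_sdiff, not_and, not_not]
    constructor
    · rintro ⟨⟨⟨heE, heS⟩, h1, h2⟩, -⟩
      have h1' := mem_fib.1 h1
      have h2' := mem_fib.1 h2
      refine ⟨⟨⟨heE, heS heE⟩, ?_, ?_⟩, h1'.2⟩
      · exact fib_subset_of_mem hA hsat hx h1
      · exact fib_subset_of_mem hA hsat hx h2
    · rintro ⟨⟨⟨heE, heS⟩, h1, h2⟩, hcr⟩
      have hVe := G.ends_mem e heE
      have hcr2 : G.crep S (G.ends e).2 = x := by
        rw [← hcr]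
        exact (crep_eq_of_eqvGen (Relation.EqvGen.rel _ _
          ⟨e, Finset.mem_inter.2 ⟨heS, heE⟩, Or.inl rfl⟩)).symm
      exact ⟨⟨⟨heE, fun _ => heS⟩, mem_fib.2 ⟨hVe.1, hcr⟩, mem_fib.2 ⟨hVe.2, hcr2⟩⟩, heE⟩
  have hsumE : ∑ x ∈ A.image (G.crep S),
      (((G.indEdges (G.E \ S) (G.fib S x)) ∩ G.E).card : ℤ) = (ESA.card : ℤ) := by
    have hunion : ESA = (A.image (G.crep S)).biUnion
        (fun x => ESA.filter (fun e => G.crep S (G.ends e).1 = x)) := by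
      ext e
      rw [Finset.mem_biUnion]
      constructor
      · intro he
        have he' := he
        rw [hESA, Finset.mem_filter, Finset.mem_inter] at he'
        exact ⟨G.crep S (G.ends e).1, Finset.mem_image_of_mem _ he'.2.1,
          Finset.mem_filter.2 ⟨he, rfl⟩⟩
      · rintro ⟨x, hx, he⟩
        exact (Finset.mem_filter.1 he).1
    have hcard : ESA.card = ∑ x ∈ A.image (G.crep S),
        (ESA.filter (fun e => G.crep S (G.ends e).1 = x)).card := by
      conv_lhs => rw [hunion]
      apply Finset.card_biUnion
      intro x hx y hy hxy
      rw [Function.onFun, Finset.disjoint_left]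
      intro e he1 he2
      exact hxy ((Finset.mem_filter.1 he1).2.symm.trans (Finset.mem_filter.1 he2).2)
    rw [hcard]
    push_cast
    apply Finset.sum_congr rfl
    intro x hx
    rw [hfibE x hx]
  -- surviving edges
  have hFBeq : (G.contract S).indEdges ((G.contract S).E \ T) (A.image (G.crep S)) =
      (G.E ∩ T).filter (fun e => (G.ends e).1 ∈ A ∧ (G.ends e).2 ∈ A) := by
    ext e
    rw [mem_FB, Finset.mem_filter, Finset.mem_inter]
    constructor
    · rintro ⟨h1, h2, h3, h4⟩
      exact ⟨⟨(Finset.mem_sdiff.1 h1).1, h2⟩,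
        (ends_mem_A_iff hA hsat (Finset.mem_sdiff.1 h1).1).2 ⟨h3, h4⟩⟩
    · rintro ⟨⟨h1, h2⟩, h3⟩
      have := (ends_mem_A_iff hA hsat h1).1 h3
      exact ⟨hT h2, h2, this.1, this.2⟩
  have hFAsplit : ((G.indEdges (G.E \ (S ∪ T)) A) ∩ G.E).card =
      ESA.card + ((G.E ∩ T).filter (fun e => (G.ends e).1 ∈ A ∧ (G.ends e).2 ∈ A)).card := by
    have hsplit : (G.indEdges (G.E \ (S ∪ T)) A) ∩ G.E =
        ESA ∪ (G.E ∩ T).filter (fun e => (G.ends e).1 ∈ A ∧ (G.ends e).2 ∈ A) := by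
      ext e
      simp only [Finset.mem_inter, mem_FA, Finset.mem_union, hESA, Finset.mem_filter,
        Finset.mem_inter]
      tauto
    rw [hsplit, Finset.card_union_of_disjoint]
    rw [Finset.disjoint_left]
    intro e he1 he2
    rw [hESA, Finset.mem_filter, Finset.mem_inter] at he1
    rw [Finset.mem_filter, Finset.mem_inter] at he2
    have := Finset.mem_sdiff.1 (hT he2.1.2)
    exact this.2 he1.1.2
  have hFBE : ((G.contract S).indEdges ((G.contract S).E \ T) (A.image (G.crep S))) ∩
      (G.contract S).E =
      (G.contract S).indEdges ((G.contract S).E \ T) (A.image (G.crep S)) := by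
    apply Finset.inter_eq_left.2
    intro e he
    rw [mem_FB] at he
    rw [contract_E]
    exact he.1
  -- assemble
  unfold WGraph.subGenus
  rw [hFBE, ncomp_contract hS hT hA hsat, Finset.sum_congr rfl hwx,
    Finset.sum_add_distrib, Finset.sum_add_distrib, Finset.sum_sub_distrib,
    hsumw, hsumcard, hsumE, Finset.sum_const]
  have h2 : (((G.indEdges (G.E \ (S ∪ T)) A) ∩ G.E).card : ℤ) =
      (ESA.card : ℤ) +
        (((G.contract S).indEdges ((G.contract S).E \ T) (A.image (G.crep S))).card : ℤ) := by
    rw [hFAsplit, hFBeq]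
    push_cast
    ring
  rw [h2]
  push_cast
  ring

end ML

end WGraph
namespace WGraph

variable {G : WGraph}

theorem sat_V {S : Finset ℕ} :
    ∀ u ∈ G.V, ∀ v ∈ G.V, Relation.EqvGen (G.adjOn S) u v → v ∈ G.V :=
  fun _ _ v hv _ => hv

theorem FA_V {S : Finset ℕ} (hS : S ⊆ G.E) :
    G.indEdges (G.E \ (S ∪ (G.E \ S))) G.V = G.E := by
  ext e
  rw [mem_FA]
  constructor
  · rintro ⟨h, -⟩; exact h
  · intro he
    refine ⟨he, ?_, (G.ends_mem e he).1, (G.ends_mem e he).2⟩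
    by_cases hs : e ∈ S
    · exact Finset.mem_union_left _ hs
    · exact Finset.mem_union_right _ (Finset.mem_sdiff.2 ⟨he, hs⟩)

theorem FB_V {S : Finset ℕ} (hS : S ⊆ G.E) :
    (G.contract S).indEdges ((G.contract S).E \ (G.E \ S)) (G.V.image (G.crep S)) =
      (G.contract S).E := by
  ext e
  rw [mem_FB, contract_E]
  constructor
  · rintro ⟨h, -⟩; exact h
  · intro he
    have heE : e ∈ G.E := (Finset.mem_sdiff.1 he).1
    exact ⟨he, he, Finset.mem_image_of_mem _ (G.ends_mem e heE).1,
      Finset.mem_image_of_mem _ (G.ends_mem e heE).2⟩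

theorem hT_V {S : Finset ℕ} : G.E \ S ⊆ G.E \ S := le_refl _

theorem genus_contract {S : Finset ℕ} (hS : S ⊆ G.E) : (G.contract S).genus = G.genus := by
  have h := subGenus_contract (G := G) hS (hT_V (S := S)) (Finset.Subset.refl G.V) sat_V
  rw [FB_V hS, FA_V hS] at h
  exact h

theorem connected_contract {S : Finset ℕ} (hS : S ⊆ G.E) (hc : G.Connected) :
    (G.contract S).Connected := by
  have h := ncomp_contract (G := G) hS (hT_V (S := S)) (Finset.Subset.refl G.V) sat_V
  rw [FB_V hS, FA_V hS] at h
  unfold WGraph.Connected WGraph.ConnSub at hc ⊢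
  have h' : (G.contract S).ncomp (G.contract S).V (G.contract S).E = G.ncomp G.V G.E := h
  exact h'.trans hc

/-- Degree of a contracted vertex. -/
theorem deg_contract {S : Finset ℕ} (hS : S ⊆ G.E) {v : ℕ} :
    (G.contract S).deg v + 2 * ((G.indEdges (G.E \ S) (G.fib S v)) ∩ G.E).card =
      ∑ u ∈ G.fib S v, G.deg u := by
  classical
  -- rewrite the sum of degrees over the fiber
  have hswap : ∑ u ∈ G.fib S v, G.deg u =
      ∑ e ∈ G.E, ((if (G.ends e).1 ∈ G.fib S v then 1 else 0) +
        (if (G.ends e).2 ∈ G.fib S v then 1 else 0)) := by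
    unfold WGraph.deg
    rw [Finset.sum_comm]
    apply Finset.sum_congr rfl
    intro e _
    rw [Finset.sum_add_distrib]
    congr 1
    · rw [Finset.sum_ite_eq (G.fib S v) (G.ends e).1 (fun _ => 1)]
    · rw [Finset.sum_ite_eq (G.fib S v) (G.ends e).2 (fun _ => 1)]
  -- split the edge sum into S-edges and surviving edges
  have hsplit : ∑ e ∈ G.E, ((if (G.ends e).1 ∈ G.fib S v then 1 else 0) +
        (if (G.ends e).2 ∈ G.fib S v then 1 else 0)) =
      (∑ e ∈ G.E \ (G.E ∩ S), ((if (G.ends e).1 ∈ G.fib S v then 1 else 0) +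
        (if (G.ends e).2 ∈ G.fib S v then 1 else 0))) +
      (∑ e ∈ G.E ∩ S, ((if (G.ends e).1 ∈ G.fib S v then 1 else 0) +
        (if (G.ends e).2 ∈ G.fib S v then 1 else 0))) :=
    (Finset.sum_sdiff (Finset.inter_subset_left)).symm
  -- surviving part is the contracted degree
  have hdeg1 : (G.contract S).deg v =
      ∑ e ∈ G.E \ (G.E ∩ S), ((if (G.ends e).1 ∈ G.fib S v then 1 else 0) +
        (if (G.ends e).2 ∈ G.fib S v then 1 else 0)) := by
    unfold WGraph.deg
    rw [show (G.contract S).E = G.E \ S from rfl,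
      show G.E \ S = G.E \ (G.E ∩ S) by
        ext e; rw [Finset.mem_sdiff, Finset.mem_sdiff, Finset.mem_inter]; tauto]
    apply Finset.sum_congr rfl
    intro e he
    have heE : e ∈ G.E := (Finset.mem_sdiff.1 he).1
    have hV := G.ends_mem e heE
    rw [contract_ends]
    congr 1
    · by_cases h : G.crep S (G.ends e).1 = v
      · rw [if_pos h, if_pos (mem_fib.2 ⟨hV.1, h⟩)]
      · rw [if_neg h, if_neg (fun hmem => h (mem_fib.1 hmem).2)]
    · by_cases h : G.crep S (G.ends e).2 = v
      · rw [if_pos h, if_pos (mem_fib.2 ⟨hV.2, h⟩)]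
      · rw [if_neg h, if_neg (fun hmem => h (mem_fib.1 hmem).2)]
  -- the S-part is twice the number of inner edges
  have hinner : ∑ e ∈ G.E ∩ S, ((if (G.ends e).1 ∈ G.fib S v then 1 else 0) +
        (if (G.ends e).2 ∈ G.fib S v then 1 else 0)) =
      2 * ((G.indEdges (G.E \ S) (G.fib S v)) ∩ G.E).card := by
    have hiff : ∀ e ∈ G.E ∩ S, ((G.ends e).1 ∈ G.fib S v ↔ (G.ends e).2 ∈ G.fib S v) := by
      intro e he
      rw [Finset.mem_inter] at he
      have hV := G.ends_mem e he.1
      have hcr : G.crep S (G.ends e).1 = G.crep S (G.ends e).2 :=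
        crep_eq_of_eqvGen (Relation.EqvGen.rel _ _
          ⟨e, Finset.mem_inter.2 ⟨he.2, he.1⟩, Or.inl rfl⟩)
      rw [mem_fib, mem_fib]
      constructor
      · rintro ⟨-, h⟩; exact ⟨hV.2, hcr ▸ h⟩
      · rintro ⟨-, h⟩; exact ⟨hV.1, hcr.symm ▸ h⟩
    have hset : (G.indEdges (G.E \ S) (G.fib S v)) ∩ G.E =
        (G.E ∩ S).filter (fun e => (G.ends e).1 ∈ G.fib S v) := by
      ext e
      rw [Finset.mem_inter, mem_indEdges, Finset.mem_filter, Finset.mem_inter]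
      simp only [Finset.mem_sdiff, not_and, not_not]
      constructor
      · rintro ⟨⟨⟨h1, h2⟩, h3, h4⟩, -⟩; exact ⟨⟨h1, h2 h1⟩, h3⟩
      · rintro ⟨⟨h1, h2⟩, h3⟩
        exact ⟨⟨⟨h1, fun _ => h2⟩, h3, (hiff e (Finset.mem_inter.2 ⟨h1, h2⟩)).1 h3⟩, h1⟩
    rw [hset, Finset.card_filter]
    rw [Finset.mul_sum]
    apply Finset.sum_congr rfl
    intro e he
    by_cases h : (G.ends e).1 ∈ G.fib S v
    · rw [if_pos h, if_pos ((hiff e he).1 h)]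
      omega
    · rw [if_neg h, if_neg (fun hh => h ((hiff e he).2 hh))]
      omega
  rw [hswap, hsplit, ← hdeg1, hinner]

/-- Contractions of stable graphs are stable. -/
theorem stable_contract {S : Finset ℕ} {g : ℕ} (hS : S ⊆ G.E) (hst : G.Stable g) :
    (G.contract S).Stable g := by
  obtain ⟨hconn, hgen, hdeg⟩ := hst
  refine ⟨connected_contract hS hconn, by rw [genus_contract hS]; exact hgen, ?_⟩
  intro v hv hw
  -- the fiber has zero genus
  have hvim : v ∈ G.V.image (G.crep S) := hv
  have hfc := fib_connected hvim
  have hw0 : G.subGenus (G.fib S v) (G.indEdges (G.E \ S) (G.fib S v)) = 0 := by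
    have h1 := subGenus_nonneg G (G.fib S v) (G.indEdges (G.E \ S) (G.fib S v))
    have h2 : (G.contract S).w v = 0 := hw
    rw [contract_w] at h2
    omega
  unfold WGraph.subGenus at hw0
  rw [hfc] at hw0
  -- abbreviations
  set k := (G.fib S v).card with hk
  set m := ((G.indEdges (G.E \ S) (G.fib S v)) ∩ G.E).card with hm
  set sw := ∑ u ∈ G.fib S v, G.w u with hsw
  have hsw' : ∑ u ∈ G.fib S v, (G.w u : ℤ) = (sw : ℤ) := by rw [hsw]; push_cast; rfl
  rw [hsw'] at hw0
  -- degree bound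
  have hdegsum : ∀ u ∈ G.fib S v, 3 ≤ G.deg u + 3 * G.w u := by
    intro u hu
    by_cases h : G.w u = 0
    · have := hdeg u (mem_fib.1 hu).1 h
      omega
    · omega
  have hsum3 : 3 * k ≤ (∑ u ∈ G.fib S v, G.deg u) + 3 * sw := by
    have := Finset.sum_le_sum hdegsum
    rw [Finset.sum_const, smul_eq_mul, Finset.sum_add_distrib, ← Finset.mul_sum] at this
    omega
  have hdc := deg_contract (v := v) hS
  omega

/-- Handshake: the sum of the degrees is twice the number of edges. -/
theorem handshake (G : WGraph) : ∑ v ∈ G.V, G.deg v = 2 * G.E.card := by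
  classical
  unfold WGraph.deg
  rw [Finset.sum_comm]
  have : ∀ e ∈ G.E, (∑ v ∈ G.V, ((if (G.ends e).1 = v then 1 else 0) +
      (if (G.ends e).2 = v then 1 else 0))) = 2 := by
    intro e he
    have hV := G.ends_mem e he
    rw [Finset.sum_add_distrib,
      Finset.sum_ite_eq (G.V) (G.ends e).1 (fun _ => 1),
      Finset.sum_ite_eq (G.V) (G.ends e).2 (fun _ => 1),
      if_pos hV.1, if_pos hV.2]
  rw [Finset.sum_congr rfl this, Finset.sum_const, smul_eq_mul, mul_comm]

/-- Bound on the number of edges of a stable graph. -/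
theorem edge_bound {g : ℕ} (hst : G.Stable g) : G.E.card + 3 ≤ 3 * g := by
  obtain ⟨hconn, hgen, hdeg⟩ := hst
  unfold WGraph.genus WGraph.subGenus at hgen
  unfold WGraph.Connected WGraph.ConnSub at hconn
  rw [hconn, Finset.inter_self] at hgen
  have hsw : ∑ v ∈ G.V, (G.w v : ℤ) = ((∑ v ∈ G.V, G.w v : ℕ) : ℤ) := by push_cast; rfl
  rw [hsw] at hgen
  have hdegs : ∀ v ∈ G.V, 3 ≤ G.deg v + 3 * G.w v := by
    intro v hv
    by_cases h : G.w v = 0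
    · have := hdeg v hv h
      omega
    · omega
  have h3 : 3 * G.V.card ≤ (∑ v ∈ G.V, G.deg v) + 3 * ∑ v ∈ G.V, G.w v := by
    have := Finset.sum_le_sum hdegs
    rw [Finset.sum_const, smul_eq_mul, Finset.sum_add_distrib, ← Finset.mul_sum] at this
    omega
  have hhs := handshake G
  omega

end WGraph
namespace WGraph

variable {G : WGraph}

theorem isoMaps_refl (G : WGraph) : G.IsoMaps G id id :=
  ⟨Set.bijOn_id _, Set.bijOn_id _, fun e _ => Or.inl rfl, fun _ _ => rfl⟩

theorem iso_refl (G : WGraph) : G.Iso G := ⟨id, id, isoMaps_refl G⟩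

theorem isoMaps_trans {H K : WGraph} {fV fE gV gE : ℕ → ℕ}
    (h1 : G.IsoMaps H fV fE) (h2 : H.IsoMaps K gV gE) :
    G.IsoMaps K (gV ∘ fV) (gE ∘ fE) := by
  obtain ⟨h1V, h1E, h1ends, h1w⟩ := h1
  obtain ⟨h2V, h2E, h2ends, h2w⟩ := h2
  refine ⟨h2V.comp h1V, h2E.comp h1E, ?_, ?_⟩
  · intro e he
    have hfe : fE e ∈ H.E := h1E.mapsTo he
    rcases h2ends (fE e) hfe with hc | hc <;> rcases h1ends e he with hc' | hc' <;>
      rw [Function.comp_apply] at * <;> simp only [Function.comp_apply]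
    · exact Or.inl (by rw [hc, hc'])
    · exact Or.inr (by rw [hc, hc'])
    · exact Or.inr (by rw [hc, hc'])
    · exact Or.inl (by rw [hc, hc'])
  · intro v hv
    rw [Function.comp_apply, h2w (fV v) (h1V.mapsTo hv), h1w v hv]

theorem iso_trans {H K : WGraph} (h1 : G.Iso H) (h2 : H.Iso K) : G.Iso K := by
  obtain ⟨fV, fE, h1⟩ := h1
  obtain ⟨gV, gE, h2⟩ := h2
  exact ⟨gV ∘ fV, gE ∘ fE, isoMaps_trans h1 h2⟩

theorem iso_symm {H : WGraph} (h : G.Iso H) : H.Iso G := by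
  classical
  obtain ⟨fV, fE, hV, hE, hends, hw⟩ := h
  set gV := Function.invFunOn fV ↑G.V with hgV
  set gE := Function.invFunOn fE ↑G.E with hgE
  have hVinv : Set.InvOn gV fV ↑G.V ↑H.V := hV.invOn_invFunOn
  have hEinv : Set.InvOn gE fE ↑G.E ↑H.E := hE.invOn_invFunOn
  have hVbij : Set.BijOn gV ↑H.V ↑G.V := hV.symm hVinv.symm
  have hEbij : Set.BijOn gE ↑H.E ↑G.E := hE.symm hEinv.symm
  refine ⟨gV, gE, hVbij, hEbij, ?_, ?_⟩
  · intro e he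
    have heG : gE e ∈ G.E := hEbij.mapsTo he
    have hfe : fE (gE e) = e := hEinv.2 he
    have haV : (G.ends (gE e)).1 ∈ G.V := (G.ends_mem _ heG).1
    have hbV : (G.ends (gE e)).2 ∈ G.V := (G.ends_mem _ heG).2
    rcases hends (gE e) heG with hc | hc
    · left
      rw [hfe] at hc
      rw [hc]
      show G.ends (gE e) = (gV (fV (G.ends (gE e)).1), gV (fV (G.ends (gE e)).2))
      rw [hVinv.1 haV, hVinv.1 hbV]
    · right
      rw [hfe] at hc
      rw [hc]
      show G.ends (gE e) = (gV (fV (G.ends (gE e)).1), gV (fV (G.ends (gE e)).2))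
      rw [hVinv.1 haV, hVinv.1 hbV]
  · intro v hv
    have hvG : gV v ∈ G.V := hVbij.mapsTo hv
    have := hw (gV v) hvG
    rw [hVinv.2 hv] at this
    exact this.symm

theorem bijOn_finset_card {s t : Finset ℕ} {f : ℕ → ℕ} (h : Set.BijOn f ↑s ↑t) :
    s.card = t.card := by
  refine Finset.card_bij (fun a _ => f a) (fun a ha => ?_) (fun a₁ h₁ a₂ h₂ hh => ?_)
    (fun b hb => ?_)
  · exact h.mapsTo ha
  · exact h.injOn h₁ h₂ hh
  · obtain ⟨a, ha, rfl⟩ := h.surjOn hb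
    exact ⟨a, ha, rfl⟩

theorem iso_card_E {H : WGraph} (h : G.Iso H) : G.E.card = H.E.card := by
  obtain ⟨fV, fE, -, hE, -, -⟩ := h
  exact bijOn_finset_card hE

/-! Contraction by the empty set. -/

theorem adjOn_empty {u v : ℕ} : ¬ G.adjOn ∅ u v := by
  rintro ⟨e, he, -⟩
  rw [Finset.empty_inter] at he
  exact absurd he (Finset.notMem_empty e)

theorem crep_empty (v : ℕ) : G.crep ∅ v = v :=
  eqvGen_bot (fun _ _ h => adjOn_empty h) (crep_spec ∅ v)

theorem contract_empty_V : (G.contract ∅).V = G.V := by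
  rw [contract_V, show G.crep ∅ = id from funext crep_empty, Finset.image_id]

theorem contract_empty_E : (G.contract ∅).E = G.E := by
  rw [contract_E, Finset.sdiff_empty]

theorem contract_empty_w {v : ℕ} (hv : v ∈ G.V) : (G.contract ∅).w v = G.w v := by
  have hfib : G.fib ∅ v = {v} := by
    ext u
    rw [mem_fib, Finset.mem_singleton, crep_empty]
    constructor
    · rintro ⟨-, rfl⟩; rfl
    · rintro rfl; exact ⟨hv, rfl⟩
  have hind : G.indEdges (G.E \ ∅) (G.fib ∅ v) = ∅ := by
    unfold WGraph.indEdges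
    rw [Finset.sdiff_empty, Finset.sdiff_self, Finset.filter_empty]
  have hsub : G.subGenus {v} (∅ : Finset ℕ) = (G.w v : ℤ) := by
    unfold WGraph.subGenus
    have hn : G.ncomp {v} ∅ = 1 := by
      have hbot : ∀ x y : {z : ℕ // z ∈ ({v} : Finset ℕ)}, ¬ G.crel {v} ∅ x y :=
        fun _ _ h => adjOn_empty h
      rw [ncomp_def, qcard_bot hbot, Nat.card_eq_fintype_card,
        Fintype.card_coe, Finset.card_singleton]
    rw [hn, Finset.empty_inter, Finset.sum_singleton, Finset.card_singleton,
      Finset.card_empty]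
    push_cast
    ring
  rw [contract_w, hind, hfib, hsub, Int.toNat_natCast]

theorem contract_empty_iso : (G.contract ∅).Iso G := by
  refine ⟨id, id, ?_, ?_, ?_, ?_⟩
  · have h : ((G.contract ∅).V : Set ℕ) = ↑G.V := by rw [contract_empty_V]
    rw [h]
    exact Set.bijOn_id _
  · have h : ((G.contract ∅).E : Set ℕ) = ↑G.E := by rw [contract_empty_E]
    rw [h]
    exact Set.bijOn_id _
  · intro e _
    left
    show G.ends e = (((G.contract ∅).ends e).1, ((G.contract ∅).ends e).2)
    rw [contract_ends, crep_empty, crep_empty]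
  · intro v hv
    have : v ∈ G.V := by rw [← contract_empty_V]; exact hv
    exact (contract_empty_w this).symm

theorem iso_contract_empty : G.Iso (G.contract ∅) :=
  iso_symm contract_empty_iso

theorem contractLE_refl (G : WGraph) : G.contractLE G :=
  ⟨∅, Finset.empty_subset _, contract_empty_iso⟩

end WGraph
namespace WGraph

variable {G : WGraph}

section CC

variable {S T : Finset ℕ}

theorem FC_fwd (hT : T ⊆ G.E \ S) {u v : ℕ}
    (h : Relation.EqvGen (G.adjOn (S ∪ T)) u v) :
    Relation.EqvGen ((G.contract S).adjOn T) (G.crep S u) (G.crep S v) := by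
  induction h with
  | rel a b hab =>
    obtain ⟨e, he, hh⟩ := hab
    rw [Finset.mem_inter, Finset.mem_union] at he
    rcases he.1 with heS | heT
    · have heq : G.crep S a = G.crep S b :=
        crep_eq_of_eqvGen (.rel _ _ ⟨e, Finset.mem_inter.2 ⟨heS, he.2⟩, hh⟩)
      rw [heq]
      exact .refl _
    · refine .rel _ _ ⟨e, Finset.mem_inter.2 ⟨heT, hT heT⟩, ?_⟩
      rcases hh with h | h
      · exact Or.inl (by rw [contract_ends, h])
      · exact Or.inr (by rw [contract_ends, h])
  | refl a => exact .refl _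
  | symm a b _ ih => exact ih.symm _ _
  | trans a b c _ _ ih1 ih2 => exact ih1.trans _ _ _ ih2

theorem FC_lift {p q : ℕ}
    (h : Relation.ReflTransGen ((G.contract S).adjOn T) p q) :
    ∀ z, G.crep S z = p → ∃ z', G.crep S z' = q ∧ Relation.EqvGen (G.adjOn (S ∪ T)) z z' := by
  induction h with
  | refl => exact fun z hz => ⟨z, hz, .refl _⟩
  | @tail m m' hm hstep ih =>
    intro z hz
    obtain ⟨z1, hz1, he1⟩ := ih z hz
    obtain ⟨e, he, hh⟩ := hstep
    rw [Finset.mem_inter] at he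
    have heES : e ∈ G.E \ S := he.2
    have heE : e ∈ G.E := (Finset.mem_sdiff.1 heES).1
    have heST : e ∈ (S ∪ T) ∩ G.E :=
      Finset.mem_inter.2 ⟨Finset.mem_union_right _ he.1, heE⟩
    rcases hh with h | h
    · rw [contract_ends] at h
      have h1 : G.crep S (G.ends e).1 = m := congrArg Prod.fst h
      have h2 : G.crep S (G.ends e).2 = m' := congrArg Prod.snd h
      have hz1a : Relation.EqvGen (G.adjOn (S ∪ T)) z1 (G.ends e).1 :=
        (eqvGen_of_crep_eq (by rw [hz1, ← h1])).mono
          (fun a b hab => adjOn_mono Finset.subset_union_left hab)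
      refine ⟨(G.ends e).2, h2, ?_⟩
      exact (he1.trans _ _ _ hz1a).trans _ _ _ (.rel _ _ ⟨e, heST, Or.inl rfl⟩)
    · rw [contract_ends] at h
      have h1 : G.crep S (G.ends e).1 = m' := congrArg Prod.fst h
      have h2 : G.crep S (G.ends e).2 = m := congrArg Prod.snd h
      have hz1a : Relation.EqvGen (G.adjOn (S ∪ T)) z1 (G.ends e).2 :=
        (eqvGen_of_crep_eq (by rw [hz1, ← h2])).mono
          (fun a b hab => adjOn_mono Finset.subset_union_left hab)
      refine ⟨(G.ends e).1, h1, ?_⟩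
      exact (he1.trans _ _ _ hz1a).trans _ _ _ (.rel _ _ ⟨e, heST, Or.inr rfl⟩)

theorem FC_bwd {u v : ℕ}
    (h : Relation.EqvGen ((G.contract S).adjOn T) (G.crep S u) (G.crep S v)) :
    Relation.EqvGen (G.adjOn (S ∪ T)) u v := by
  have hrtg := (eqvGen_iff_rtg (adjOn_symm (G := G.contract S))).1 h
  obtain ⟨z', hz', he⟩ := FC_lift hrtg u rfl
  have : Relation.EqvGen (G.adjOn (S ∪ T)) z' v :=
    (eqvGen_of_crep_eq hz').mono (fun a b hab => adjOn_mono Finset.subset_union_left hab)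
  exact he.trans _ _ _ this

theorem crep2_eq_iff (hT : T ⊆ G.E \ S) {u v : ℕ} :
    (G.contract S).crep T (G.crep S u) = (G.contract S).crep T (G.crep S v) ↔
      G.crep (S ∪ T) u = G.crep (S ∪ T) v := by
  constructor
  · intro h
    exact crep_eq_of_eqvGen (FC_bwd (eqvGen_of_crep_eq h))
  · intro h
    exact crep_eq_of_eqvGen (FC_fwd hT (eqvGen_of_crep_eq h))

theorem crep2_crep (hT : T ⊆ G.E \ S) (u : ℕ) :
    (G.contract S).crep T (G.crep S (G.crep (S ∪ T) u)) =
      (G.contract S).crep T (G.crep S u) :=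
  (crep2_eq_iff hT).2 (crep_idem _ u)

/-- Contractions compose (up to canonical identification). -/
theorem contract_contract (hS : S ⊆ G.E) (hT : T ⊆ G.E \ S) :
    (G.contract (S ∪ T)).IsoMaps ((G.contract S).contract T)
      (fun x => (G.contract S).crep T (G.crep S x)) id := by
  have hST : S ∪ T ⊆ G.E := by
    intro e he
    rcases Finset.mem_union.1 he with h | h
    · exact hS h
    · exact (Finset.mem_sdiff.1 (hT h)).1
  have hVmem : ∀ x ∈ (G.contract (S ∪ T)).V, x ∈ G.V ∧ G.crep (S ∪ T) x = x := by
    intro x hx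
    obtain ⟨u, hu, rfl⟩ := Finset.mem_image.1 hx
    exact ⟨crep_mem_V hu, crep_idem _ u⟩
  have hEeq : (G.contract (S ∪ T)).E = ((G.contract S).contract T).E := by
    rw [contract_E, contract_E, contract_E]
    ext e
    simp only [Finset.mem_sdiff, Finset.mem_union]
    tauto
  refine ⟨⟨?_, ?_, ?_⟩, ?_, ?_, ?_⟩
  · -- mapsTo
    intro x hx
    have hxV : x ∈ G.V := (hVmem x (by exact hx)).1
    exact Finset.mem_image_of_mem _ (Finset.mem_image_of_mem _ hxV)
  · -- injOn
    intro x hx y hy hxy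
    have hx' := hVmem x (by exact hx)
    have hy' := hVmem y (by exact hy)
    have := (crep2_eq_iff hT).1 hxy
    rw [hx'.2, hy'.2] at this
    exact this
  · -- surjOn
    intro z hz
    obtain ⟨y, hy, rfl⟩ := Finset.mem_image.1 (by exact hz : z ∈ ((G.contract S).contract T).V)
    obtain ⟨u, hu, rfl⟩ := Finset.mem_image.1 (by exact hy : y ∈ (G.contract S).V)
    refine ⟨G.crep (S ∪ T) u, ?_, ?_⟩
    · exact Finset.mem_image_of_mem _ hu
    · exact crep2_crep hT u
  · -- edges
    have h : ((G.contract (S ∪ T)).E : Set ℕ) = ↑((G.contract S).contract T).E := by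
      rw [hEeq]
    rw [h]
    exact Set.bijOn_id _
  · -- ends
    intro e he
    left
    have h1 : (G.contract S).crep T (G.crep S ((G.contract (S ∪ T)).ends e).1) =
        (G.contract S).crep T (G.crep S (G.ends e).1) := by
      rw [contract_ends]
      exact crep2_crep hT _
    have h2 : (G.contract S).crep T (G.crep S ((G.contract (S ∪ T)).ends e).2) =
        (G.contract S).crep T (G.crep S (G.ends e).2) := by
      rw [contract_ends]
      exact crep2_crep hT _
    show _ = ((G.contract S).crep T (G.crep S ((G.contract (S ∪ T)).ends e).1),
              (G.contract S).crep T (G.crep S ((G.contract (S ∪ T)).ends e).2))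
    rw [h1, h2]
    rfl
  · -- weights
    intro x hx
    have hx' := hVmem x hx
    have hAfibV : G.fib (S ∪ T) x ⊆ G.V := Finset.filter_subset _ _
    have hsat : ∀ u ∈ G.fib (S ∪ T) x, ∀ v ∈ G.V,
        Relation.EqvGen (G.adjOn S) u v → v ∈ G.fib (S ∪ T) x := by
      intro u hu v hv huv
      have : G.crep (S ∪ T) v = G.crep (S ∪ T) u :=
        crep_eq_of_eqvGen ((huv.symm _ _).mono
          (fun a b hab => adjOn_mono Finset.subset_union_left hab))
      exact mem_fib.2 ⟨hv, this.trans (mem_fib.1 hu).2⟩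
    have hfib2 : (G.contract S).fib T ((G.contract S).crep T (G.crep S x)) =
        (G.fib (S ∪ T) x).image (G.crep S) := by
      ext y
      rw [mem_fib]
      constructor
      · rintro ⟨hy, hcr⟩
        obtain ⟨u, hu, rfl⟩ := Finset.mem_image.1 (by exact hy : y ∈ (G.contract S).V)
        have heq : G.crep (S ∪ T) u = G.crep (S ∪ T) x := (crep2_eq_iff hT).1 hcr
        refine Finset.mem_image_of_mem _ (mem_fib.2 ⟨hu, ?_⟩)
        rw [heq, hx'.2]
      · intro hy
        obtain ⟨u, hu, rfl⟩ := Finset.mem_image.1 hy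
        obtain ⟨huV, hucr⟩ := mem_fib.1 hu
        refine ⟨Finset.mem_image_of_mem _ huV, ?_⟩
        apply (crep2_eq_iff hT).2
        rw [hucr, hx'.2]
    show ((G.contract S).contract T).w ((G.contract S).crep T (G.crep S x)) = _
    rw [contract_w, hfib2, subGenus_contract hS hT hAfibV hsat, contract_w]

end CC

end WGraph
namespace WGraph

variable {G : WGraph}

section SGI

variable {H : WGraph} {fV fE : ℕ → ℕ}

theorem ncomp_iso (h : G.IsoMaps H fV fE) {W F : Finset ℕ} (hW : W ⊆ G.V) (hF : F ⊆ G.E) :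
    H.ncomp (W.image fV) (F.image fE) = G.ncomp W F := by
  classical
  obtain ⟨hV, hE, hends, hw⟩ := h
  have hmaps : ∀ z : {x : ℕ // x ∈ W}, fV z.1 ∈ W.image fV :=
    fun z => Finset.mem_image_of_mem _ z.2
  -- sound
  have hsound : ∀ z z' : {x : ℕ // x ∈ W}, G.crel W F z z' →
      Quot.mk (H.crel (W.image fV) (F.image fE)) ⟨fV z.1, hmaps z⟩ =
        Quot.mk _ ⟨fV z'.1, hmaps z'⟩ := by
    rintro z z' ⟨e, he, hh⟩
    rw [Finset.mem_inter] at he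
    have heE : e ∈ G.E := he.2
    apply Quot.sound
    refine ⟨fE e, Finset.mem_inter.2 ⟨Finset.mem_image_of_mem _ he.1, hE.mapsTo heE⟩, ?_⟩
    rcases hends e heE with hc | hc <;> rcases hh with hh | hh <;> rw [hh] at hc
    · exact Or.inl hc
    · exact Or.inr hc
    · exact Or.inr hc
    · exact Or.inl hc
  set ψ : Quot (G.crel W F) → Quot (H.crel (W.image fV) (F.image fE)) :=
    Quot.lift (fun z => Quot.mk _ ⟨fV z.1, hmaps z⟩) hsound with hψ
  -- lifting of a step
  have hstep : ∀ p m : {x : ℕ // x ∈ W.image fV}, H.crel (W.image fV) (F.image fE) p m →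
      ∀ z : {x : ℕ // x ∈ W}, fV z.1 = p.1 →
        ∃ z' : {x : ℕ // x ∈ W}, fV z'.1 = m.1 ∧ G.crel W F z z' := by
    rintro p m ⟨e', he', hh⟩ z hz
    rw [Finset.mem_inter] at he'
    obtain ⟨e, heF, rfl⟩ := Finset.mem_image.1 he'.1
    have heE : e ∈ G.E := hF heF
    have haV : (G.ends e).1 ∈ G.V := (G.ends_mem e heE).1
    have hbV : (G.ends e).2 ∈ G.V := (G.ends_mem e heE).2
    have hzV : z.1 ∈ G.V := hW z.2
    have hmW : ∃ w ∈ W, fV w = m.1 := by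
      obtain ⟨w, hw', hww⟩ := Finset.mem_image.1 m.2
      exact ⟨w, hw', hww⟩
    obtain ⟨w, hwW, hwm⟩ := hmW
    have hwV : w ∈ G.V := hW hwW
    have hcases : (p.1 = fV (G.ends e).1 ∧ m.1 = fV (G.ends e).2) ∨
        (p.1 = fV (G.ends e).2 ∧ m.1 = fV (G.ends e).1) := by
      rcases hends e heE with hc | hc <;> rcases hh with hh | hh <;> rw [hh] at hc <;>
        rw [Prod.mk.injEq] at hc
      · exact Or.inl ⟨hc.1, hc.2⟩
      · exact Or.inr ⟨hc.2, hc.1⟩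
      · exact Or.inr ⟨hc.1, hc.2⟩
      · exact Or.inl ⟨hc.2, hc.1⟩
    rcases hcases with ⟨hp, hm⟩ | ⟨hp, hm⟩
    · have hza : z.1 = (G.ends e).1 := hV.injOn hzV haV (by rw [hz, hp])
      have hwb : w = (G.ends e).2 := hV.injOn hwV hbV (by rw [hwm, hm])
      refine ⟨⟨(G.ends e).2, hwb ▸ hwW⟩, by rw [← hm], ?_⟩
      exact ⟨e, Finset.mem_inter.2 ⟨heF, heE⟩, Or.inl (by rw [hza])⟩
    · have hza : z.1 = (G.ends e).2 := hV.injOn hzV hbV (by rw [hz, hp])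
      have hwb : w = (G.ends e).1 := hV.injOn hwV haV (by rw [hwm, hm])
      refine ⟨⟨(G.ends e).1, hwb ▸ hwW⟩, by rw [← hm], ?_⟩
      exact ⟨e, Finset.mem_inter.2 ⟨heF, heE⟩, Or.inr (by rw [hza])⟩
  have hlift : ∀ p q : {x : ℕ // x ∈ W.image fV},
      Relation.ReflTransGen (H.crel (W.image fV) (F.image fE)) p q →
      ∀ z : {x : ℕ // x ∈ W}, fV z.1 = p.1 →
        ∃ z' : {x : ℕ // x ∈ W}, fV z'.1 = q.1 ∧
          Quot.mk (G.crel W F) z = Quot.mk _ z' := by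
    intro p q hpq
    induction hpq with
    | refl => exact fun z hz => ⟨z, hz, rfl⟩
    | @tail m m' hm hs ih =>
      intro z hz
      obtain ⟨z1, hz1, hmk1⟩ := ih z hz
      obtain ⟨z2, hz2, hstep2⟩ := hstep m m' hs z1 hz1
      exact ⟨z2, hz2, hmk1.trans (Quot.sound hstep2)⟩
  have hbij : Function.Bijective ψ := by
    constructor
    · intro x y hxy
      obtain ⟨z, rfl⟩ := Quot.exists_rep x
      obtain ⟨z', rfl⟩ := Quot.exists_rep y
      have hq : Quot.mk (H.crel (W.image fV) (F.image fE)) ⟨fV z.1, hmaps z⟩ =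
          Quot.mk _ ⟨fV z'.1, hmaps z'⟩ := hxy
      have hrtg := (eqvGen_iff_rtg (crel_symm (G := H))).1 (Quot.eq.1 hq)
      obtain ⟨z'', hz'', hmk⟩ := hlift _ _ hrtg z rfl
      have : z'' = z' := Subtype.ext (hV.injOn (hW z''.2) (hW z'.2) hz'')
      rw [hmk, this]
    · intro q
      obtain ⟨b, rfl⟩ := Quot.exists_rep q
      obtain ⟨a, ha, hab⟩ := Finset.mem_image.1 b.2
      refine ⟨Quot.mk _ ⟨a, ha⟩, ?_⟩
      have hred : ψ (Quot.mk _ ⟨a, ha⟩) =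
          Quot.mk (H.crel (W.image fV) (F.image fE)) ⟨fV a, hmaps ⟨a, ha⟩⟩ := rfl
      rw [hred]
      exact congrArg _ (Subtype.ext hab)
  rw [ncomp_def, ncomp_def]
  exact (Nat.card_eq_of_bijective ψ hbij).symm

theorem subGenus_iso (h : G.IsoMaps H fV fE) {W F : Finset ℕ}
    (hW : W ⊆ G.V) (hF : F ⊆ G.E) :
    H.subGenus (W.image fV) (F.image fE) = G.subGenus W F := by
  classical
  have hVinjW : ∀ x ∈ W, ∀ y ∈ W, fV x = fV y → x = y :=
    fun x hx y hy => h.1.injOn (hW hx) (hW hy)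
  have hEinjF : ∀ x ∈ F, ∀ y ∈ F, fE x = fE y → x = y :=
    fun x hx y hy => h.2.1.injOn (hF hx) (hF hy)
  have hsum : ∑ v ∈ W.image fV, (H.w v : ℤ) = ∑ v ∈ W, (G.w v : ℤ) := by
    rw [Finset.sum_image hVinjW]
    apply Finset.sum_congr rfl
    intro v hv
    rw [h.2.2.2 v (hW hv)]
  have hcard : (W.image fV).card = W.card := Finset.card_image_of_injOn
    (fun x hx y hy => h.1.injOn (hW hx) (hW hy))
  have hFG : F ∩ G.E = F := Finset.inter_eq_left.2 hF
  have hFH : F.image fE ∩ H.E = F.image fE := by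
    apply Finset.inter_eq_left.2
    intro e' he'
    obtain ⟨e, heF, rfl⟩ := Finset.mem_image.1 he'
    exact h.2.1.mapsTo (hF heF)
  have hcardE : (F.image fE).card = F.card := Finset.card_image_of_injOn hEinjF
  unfold WGraph.subGenus
  rw [hsum, hcard, hFG, hFH, hcardE, ncomp_iso h hW hF]

end SGI

end WGraph
namespace WGraph

variable {G : WGraph}

section CI

variable {H : WGraph} {fV fE : ℕ → ℕ} {T' : Finset ℕ}

theorem IC_fwd (h : G.IsoMaps H fV fE) (hT' : T' ⊆ H.E) {u v : ℕ}
    (huv : Relation.EqvGen (G.adjOn (G.E.filter (fun e => fE e ∈ T'))) u v) :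
    Relation.EqvGen (H.adjOn T') (fV u) (fV v) := by
  induction huv with
  | rel a b hab =>
    obtain ⟨e, he, hh⟩ := hab
    rw [Finset.mem_inter, Finset.mem_filter] at he
    have heE : e ∈ G.E := he.2
    refine .rel _ _ ⟨fE e, Finset.mem_inter.2 ⟨he.1.2, h.2.1.mapsTo heE⟩, ?_⟩
    rcases h.2.2.1 e heE with hc | hc <;> rcases hh with hh | hh <;> rw [hh] at hc
    · exact Or.inl hc
    · exact Or.inr hc
    · exact Or.inr hc
    · exact Or.inl hc
  | refl a => exact .refl _
  | symm a b _ ih => exact ih.symm _ _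
  | trans a b c _ _ ih1 ih2 => exact ih1.trans _ _ _ ih2

theorem IC_lift (h : G.IsoMaps H fV fE) (hT' : T' ⊆ H.E) {p q : ℕ}
    (hpq : Relation.ReflTransGen (H.adjOn T') p q) :
    ∀ u ∈ G.V, fV u = p → ∃ u' ∈ G.V, fV u' = q ∧
      Relation.EqvGen (G.adjOn (G.E.filter (fun e => fE e ∈ T'))) u u' := by
  induction hpq with
  | refl => exact fun u hu hup => ⟨u, hu, hup, .refl _⟩
  | @tail m m' hm hs ih =>
    intro u hu hup
    obtain ⟨u1, hu1, hu1m, he1⟩ := ih u hu hup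
    obtain ⟨e', he', hh⟩ := hs
    rw [Finset.mem_inter] at he'
    obtain ⟨e, heE, rfl⟩ := h.2.1.surjOn he'.2
    have heE' : e ∈ G.E := heE
    have heT : e ∈ G.E.filter (fun e => fE e ∈ T') :=
      Finset.mem_filter.2 ⟨heE', he'.1⟩
    have haV : (G.ends e).1 ∈ G.V := (G.ends_mem e heE').1
    have hbV : (G.ends e).2 ∈ G.V := (G.ends_mem e heE').2
    have hcases : (m = fV (G.ends e).1 ∧ m' = fV (G.ends e).2) ∨
        (m = fV (G.ends e).2 ∧ m' = fV (G.ends e).1) := by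
      rcases h.2.2.1 e heE' with hc | hc <;> rcases hh with hh | hh <;> rw [hh] at hc <;>
        rw [Prod.mk.injEq] at hc
      · exact Or.inl ⟨hc.1, hc.2⟩
      · exact Or.inr ⟨hc.2, hc.1⟩
      · exact Or.inr ⟨hc.1, hc.2⟩
      · exact Or.inl ⟨hc.2, hc.1⟩
    rcases hcases with ⟨hp, hq⟩ | ⟨hp, hq⟩
    · have hua : u1 = (G.ends e).1 := h.1.injOn hu1 haV (by rw [hu1m, hp])
      refine ⟨(G.ends e).2, hbV, hq.symm, ?_⟩
      exact he1.trans _ _ _ (.rel _ _ ⟨e, Finset.mem_inter.2 ⟨heT, heE'⟩, Or.inl (by rw [hua])⟩)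
    · have hua : u1 = (G.ends e).2 := h.1.injOn hu1 hbV (by rw [hu1m, hp])
      refine ⟨(G.ends e).1, haV, hq.symm, ?_⟩
      exact he1.trans _ _ _ (.rel _ _ ⟨e, Finset.mem_inter.2 ⟨heT, heE'⟩, Or.inr (by rw [hua])⟩)

theorem IC_bwd (h : G.IsoMaps H fV fE) (hT' : T' ⊆ H.E) {u v : ℕ}
    (hu : u ∈ G.V) (hv : v ∈ G.V)
    (huv : Relation.EqvGen (H.adjOn T') (fV u) (fV v)) :
    Relation.EqvGen (G.adjOn (G.E.filter (fun e => fE e ∈ T'))) u v := by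
  have hrtg := (eqvGen_iff_rtg (adjOn_symm (G := H))).1 huv
  obtain ⟨u', hu', hufv, he⟩ := IC_lift h hT' hrtg u hu rfl
  have : u' = v := h.1.injOn hu' hv hufv
  rw [← this]
  exact he

/-- Contraction commutes with isomorphism. -/
theorem contract_iso (h : G.IsoMaps H fV fE) (hT' : T' ⊆ H.E) :
    (G.contract (G.E.filter (fun e => fE e ∈ T'))).IsoMaps (H.contract T')
      (fun x => H.crep T' (fV x)) fE := by
  classical
  set T := G.E.filter (fun e => fE e ∈ T') with hTdef
  have hT : T ⊆ G.E := Finset.filter_subset _ _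
  have hVmem : ∀ x ∈ (G.contract T).V, x ∈ G.V ∧ G.crep T x = x := by
    intro x hx
    obtain ⟨u, hu, rfl⟩ := Finset.mem_image.1 hx
    exact ⟨crep_mem_V hu, crep_idem _ u⟩
  -- key compatibility
  have hkey : ∀ u v, u ∈ G.V → v ∈ G.V →
      (H.crep T' (fV u) = H.crep T' (fV v) ↔ G.crep T u = G.crep T v) := by
    intro u v hu hv
    constructor
    · intro hh
      exact crep_eq_of_eqvGen (IC_bwd h hT' hu hv (eqvGen_of_crep_eq hh))
    · intro hh
      exact crep_eq_of_eqvGen (IC_fwd h hT' (eqvGen_of_crep_eq hh))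
  have hcrep_fV : ∀ u ∈ G.V, H.crep T' (fV (G.crep T u)) = H.crep T' (fV u) := by
    intro u hu
    exact (hkey _ _ (crep_mem_V hu) hu).2 (crep_idem T u)
  refine ⟨⟨?_, ?_, ?_⟩, ?_, ?_, ?_⟩
  · -- mapsTo
    intro x hx
    have hxV : x ∈ G.V := (hVmem x hx).1
    exact Finset.mem_image_of_mem _ (h.1.mapsTo hxV)
  · -- injOn
    intro x hx y hy hxy
    have hx' := hVmem x hx
    have hy' := hVmem y hy
    have := (hkey x y hx'.1 hy'.1).1 hxy
    rw [hx'.2, hy'.2] at this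
    exact this
  · -- surjOn
    intro z hz
    obtain ⟨y, hy, rfl⟩ := Finset.mem_image.1 (by exact hz : z ∈ (H.contract T').V)
    obtain ⟨u, hu, rfl⟩ := h.1.surjOn (by exact hy : y ∈ ↑H.V)
    have huV : u ∈ G.V := hu
    refine ⟨G.crep T u, Finset.mem_image_of_mem _ huV, hcrep_fV u huV⟩
  · -- edge bijection
    refine ⟨?_, ?_, ?_⟩
    · intro e he
      have he' : e ∈ G.E \ T := he
      rw [Finset.mem_sdiff, hTdef, Finset.mem_filter] at he'
      have : fE e ∈ H.E := h.2.1.mapsTo he'.1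
      show fE e ∈ ((H.contract T').E : Set ℕ)
      rw [contract_E]
      exact Finset.mem_coe.2 (Finset.mem_sdiff.2 ⟨this, fun hmem => he'.2 ⟨he'.1, hmem⟩⟩)
    · intro x hx y hy hxy
      have hx' : x ∈ G.E := (Finset.mem_sdiff.1 (Finset.mem_coe.1 hx)).1
      have hy' : y ∈ G.E := (Finset.mem_sdiff.1 (Finset.mem_coe.1 hy)).1
      exact h.2.1.injOn hx' hy' hxy
    · intro e' he'
      have he'' : e' ∈ H.E \ T' := he'
      rw [Finset.mem_sdiff] at he''
      obtain ⟨e, heE, rfl⟩ := h.2.1.surjOn (by exact he''.1 : e' ∈ ↑H.E)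
      refine ⟨e, ?_, rfl⟩
      show e ∈ ((G.contract T).E : Set ℕ)
      rw [contract_E]
      refine Finset.mem_coe.2 (Finset.mem_sdiff.2 ⟨heE, fun hmem => ?_⟩)
      rw [hTdef, Finset.mem_filter] at hmem
      exact he''.2 hmem.2
  · -- ends
    intro e he
    have heG : e ∈ G.E := (Finset.mem_sdiff.1 (by exact he : e ∈ G.E \ T)).1
    have haV : (G.ends e).1 ∈ G.V := (G.ends_mem e heG).1
    have hbV : (G.ends e).2 ∈ G.V := (G.ends_mem e heG).2
    have hl : (H.contract T').ends (fE e) =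
        (H.crep T' (H.ends (fE e)).1, H.crep T' (H.ends (fE e)).2) := rfl
    rcases h.2.2.1 e heG with hc | hc
    · left
      rw [hl, hc]
      show _ = (H.crep T' (fV ((G.contract T).ends e).1), H.crep T' (fV ((G.contract T).ends e).2))
      rw [contract_ends, hcrep_fV _ haV, hcrep_fV _ hbV]
    · right
      rw [hl, hc]
      show _ = (H.crep T' (fV ((G.contract T).ends e).2), H.crep T' (fV ((G.contract T).ends e).1))
      rw [contract_ends, hcrep_fV _ haV, hcrep_fV _ hbV]
  · -- weights
    intro x hx
    have hx' := hVmem x hx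
    have hfibW : G.fib T x ⊆ G.V := Finset.filter_subset _ _
    have hfibH : H.fib T' (H.crep T' (fV x)) = (G.fib T x).image fV := by
      ext y
      rw [mem_fib]
      constructor
      · rintro ⟨hy, hcr⟩
        obtain ⟨u, hu, rfl⟩ := h.1.surjOn (by exact hy : y ∈ ↑H.V)
        have huV : u ∈ G.V := hu
        have := (hkey u x huV hx'.1).1 hcr
        rw [hx'.2] at this
        exact Finset.mem_image_of_mem _ (mem_fib.2 ⟨huV, this⟩)
      · intro hy
        obtain ⟨u, hu, rfl⟩ := Finset.mem_image.1 hy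
        obtain ⟨huV, hucr⟩ := mem_fib.1 hu
        refine ⟨h.1.mapsTo huV, ?_⟩
        apply (hkey u x huV hx'.1).2
        rw [hucr, hx'.2]
    have hindH : H.indEdges (H.E \ T') ((G.fib T x).image fV) =
        (G.indEdges (G.E \ T) (G.fib T x)).image fE := by
      ext e'
      rw [mem_indEdges]
      constructor
      · rintro ⟨⟨he'E, he'nT⟩, h1, h2⟩
        have he'T : e' ∈ T' := by
          by_contra hc
          exact he'nT (Finset.mem_sdiff.2 ⟨he'E, hc⟩)
        obtain ⟨e, heE, rfl⟩ := h.2.1.surjOn (by exact he'E : e' ∈ ↑H.E)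
        have heG : e ∈ G.E := heE
        have haV : (G.ends e).1 ∈ G.V := (G.ends_mem e heG).1
        have hbV : (G.ends e).2 ∈ G.V := (G.ends_mem e heG).2
        have hendsfib : (G.ends e).1 ∈ G.fib T x ∧ (G.ends e).2 ∈ G.fib T x := by
          rcases h.2.2.1 e heG with hc | hc
          · rw [hc] at h1 h2
            obtain ⟨w1, hw1, hww1⟩ := Finset.mem_image.1 h1
            obtain ⟨w2, hw2, hww2⟩ := Finset.mem_image.1 h2
            rw [h.1.injOn (hfibW hw1) haV hww1] at hw1
            rw [h.1.injOn (hfibW hw2) hbV hww2] at hw2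
            exact ⟨hw1, hw2⟩
          · rw [hc] at h1 h2
            obtain ⟨w1, hw1, hww1⟩ := Finset.mem_image.1 h1
            obtain ⟨w2, hw2, hww2⟩ := Finset.mem_image.1 h2
            rw [h.1.injOn (hfibW hw1) hbV hww1] at hw1
            rw [h.1.injOn (hfibW hw2) haV hww2] at hw2
            exact ⟨hw2, hw1⟩
        refine Finset.mem_image_of_mem _ ?_
        rw [mem_indEdges]
        refine ⟨⟨heG, fun hmem => ?_⟩, hendsfib⟩
        · rw [Finset.mem_sdiff] at hmem
          exact hmem.2 (Finset.mem_filter.2 ⟨heG, he'T⟩)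
      · intro he'
        obtain ⟨e, he, rfl⟩ := Finset.mem_image.1 he'
        rw [mem_indEdges] at he
        obtain ⟨⟨heG, henT⟩, h1, h2⟩ := he
        have heT' : fE e ∈ T' := by
          by_contra hc
          exact henT (Finset.mem_sdiff.2 ⟨heG, fun hT0 => hc (Finset.mem_filter.1 hT0).2⟩)
        refine ⟨⟨h.2.1.mapsTo heG, fun hmem => (Finset.mem_sdiff.1 hmem).2 heT'⟩, ?_, ?_⟩
        · rcases h.2.2.1 e heG with hc | hc <;> rw [hc]
          · exact Finset.mem_image_of_mem _ h1
          · exact Finset.mem_image_of_mem _ h2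
        · rcases h.2.2.1 e heG with hc | hc <;> rw [hc]
          · exact Finset.mem_image_of_mem _ h2
          · exact Finset.mem_image_of_mem _ h1
    show (H.contract T').w (H.crep T' (fV x)) = _
    rw [contract_w, hfibH, hindH, contract_w,
      subGenus_iso h hfibW (by intro e he; exact (mem_indEdges.1 he).1.1)]

end CI

end WGraph
namespace WGraph

theorem contractLE_trans' {G H K : WGraph} (h1 : G.contractLE H) (h2 : H.contractLE K) :
    G.contractLE K := by
  classical
  obtain ⟨S, hS, fV, fE, hiso1⟩ := h1
  obtain ⟨T₀, hT₀, hiso2⟩ := h2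
  have hT : (G.contract S).E.filter (fun e => fE e ∈ T₀) ⊆ G.E \ S := by
    intro e he
    exact Finset.mem_filter.1 he |>.1
  have hci : ((G.contract S).contract ((G.contract S).E.filter (fun e => fE e ∈ T₀))).Iso
      (H.contract T₀) := ⟨_, _, contract_iso hiso1 hT₀⟩
  have hcc : (G.contract (S ∪ (G.contract S).E.filter (fun e => fE e ∈ T₀))).Iso
      ((G.contract S).contract ((G.contract S).E.filter (fun e => fE e ∈ T₀))) :=
    ⟨_, _, contract_contract hS hT⟩
  refine ⟨S ∪ (G.contract S).E.filter (fun e => fE e ∈ T₀), ?_, ?_⟩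
  · intro e he
    rcases Finset.mem_union.1 he with h | h
    · exact hS h
    · exact (Finset.mem_sdiff.1 (hT h)).1
  · exact iso_trans hcc (iso_trans hci hiso2)

theorem contractLE_antisymm' {G H : WGraph} (h1 : G.contractLE H) (h2 : H.contractLE G) :
    G.Iso H := by
  obtain ⟨S, hS, hiso1⟩ := h1
  obtain ⟨T, hT, hiso2⟩ := h2
  have c1 : (G.E \ S).card = H.E.card := by
    have := iso_card_E hiso1
    rw [contract_E] at this
    exact this
  have c2 : (H.E \ T).card = G.E.card := by
    have := iso_card_E hiso2
    rw [contract_E] at this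
    exact this
  rw [Finset.card_sdiff_of_subset hS] at c1
  rw [Finset.card_sdiff_of_subset hT] at c2
  have hle1 := Finset.card_le_card hS
  have hle2 := Finset.card_le_card hT
  have hS0 : S.card = 0 := by omega
  have : S = ∅ := Finset.card_eq_zero.1 hS0
  subst this
  exact iso_trans iso_contract_empty hiso1

end WGraph

/-- For `g ≥ 2`, the set `S_g` of stable graphs of genus `g`
(up to isomorphism), partially ordered by edge-contraction, is a graded poset
with rank `G ↦ 3g − 3 − |E(G)|`. -/
theorem Sg_graded_poset (g : ℕ) (hg : 2 ≤ g) :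
    IsPartialOrderOnMod (fun G : WGraph => G.Stable g) WGraph.Iso WGraph.contractLE ∧
    IsRankOnMod (fun G : WGraph => G.Stable g) WGraph.Iso WGraph.contractLE
      (fun G => 3 * g - 3 - G.E.card) := by
  classical
  constructor
  · refine ⟨fun a _ => WGraph.contractLE_refl a,
      fun a b c _ _ _ hab hbc => WGraph.contractLE_trans' hab hbc,
      fun a b _ _ hab hba => WGraph.contractLE_antisymm' hab hba⟩
  · rintro a a' ⟨hPa, hPa', ⟨S, hS, hiso⟩, hne, hmax⟩
    have hcard : a'.E.card + S.card = a.E.card := by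
      have h1 := WGraph.iso_card_E hiso
      rw [WGraph.contract_E, Finset.card_sdiff_of_subset hS] at h1
      have h2 := Finset.card_le_card hS
      omega
    have hSne : S ≠ ∅ := by
      rintro rfl
      exact hne (WGraph.iso_trans WGraph.iso_contract_empty hiso)
    have hS1 : S.card = 1 := by
      by_contra hc
      have hS2 : 2 ≤ S.card := by
        have := Finset.card_pos.2 (Finset.nonempty_of_ne_empty hSne)
        omega
      obtain ⟨e, he⟩ := Finset.nonempty_of_ne_empty hSne
      have heE : e ∈ a.E := hS he
      have hce : {e} ⊆ a.E := Finset.singleton_subset_iff.2 heE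
      have hPc : (a.contract {e}).Stable g := WGraph.stable_contract hce hPa
      have hlac : a.contractLE (a.contract {e}) := ⟨{e}, hce, WGraph.iso_refl _⟩
      have hT2 : S \ {e} ⊆ a.E \ {e} := by
        intro x hx
        rw [Finset.mem_sdiff] at hx ⊢
        exact ⟨hS hx.1, hx.2⟩
      have hun : {e} ∪ (S \ {e}) = S := by
        ext x
        rw [Finset.mem_union, Finset.mem_sdiff, Finset.mem_singleton]
        constructor
        · rintro (rfl | ⟨h, -⟩)
          · exact he
          · exact h
        · intro hx
          by_cases hxe : x = e
          · exact Or.inl hxe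
          · exact Or.inr ⟨hx, hxe⟩
      have hcc := WGraph.contract_contract (G := a) hce hT2
      rw [hun] at hcc
      have hlca' : (a.contract {e}).contractLE a' := by
        refine ⟨S \ {e}, ?_, ?_⟩
        · rw [WGraph.contract_E]
          exact hT2
        · exact WGraph.iso_trans (WGraph.iso_symm ⟨_, _, hcc⟩) hiso
      have hcec : (a.contract {e}).E.card + 1 = a.E.card := by
        rw [WGraph.contract_E, Finset.card_sdiff_of_subset hce, Finset.card_singleton]
        have : 1 ≤ a.E.card := Finset.card_le_card hce
        omega
      rcases hmax (a.contract {e}) hPc hlac hlca' with hic | hic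
      · have := WGraph.iso_card_E hic
        omega
      · have := WGraph.iso_card_E hic
        omega
    have hEb := WGraph.edge_bound hPa
    have h1le : 1 ≤ a.E.card := by
      have := Finset.card_le_card hS
      omega
    simp only
    omega
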